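/- arXiv:1109.0203 — 6 statements merged into one kernel-verified Lean document; each statement's English description precedes it below -/
import Mathlib

section
/- If E is a finitely generated module over a Noetherian local ring (R, m) such that E has no free direct summand, then every endomorphism of E of the form I + Σ fᵢ(−)·eᵢ (with fᵢ ∈ Hom_R(E,R), eᵢ ∈ E) is an automorphism of E; in particular the image of the natural map E* ⊗_R E → End_R(E) is contained in the Jacobson radical of End_R(E). -/
/-- `E` has a free direct summand, i.e. a direct summand isomorphic to `R`,
equivalently there is a split surjection `E → R`. -/
def HasFreeSummand (R E : Type*) [CommRing R] [AddCommGroup E] [Module R E] : Prop :=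
  ∃ (g : E →ₗ[R] R) (s : R →ₗ[R] E), g.comp s = LinearMap.id

section Aux

variable (R E : Type) [CommRing R] [IsLocalRing R] [IsNoetherianRing R]
  [AddCommGroup E] [Module R E] [Module.Finite R E]

theorem dual_val_mem_max (hfree : ¬ HasFreeSummand R E) (f : Module.Dual R E) (x : E) :
    f x ∈ IsLocalRing.maximalIdeal R := by
  by_contra h
  rw [IsLocalRing.mem_maximalIdeal] at h
  have hu : IsUnit (f x) := by rwa [mem_nonunits_iff, not_not] at h
  obtain ⟨u, hu⟩ := hu
  refine hfree ⟨f, LinearMap.toSpanSingleton R E ((↑u⁻¹ : R) • x), ?_⟩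
  ext r
  simp only [LinearMap.coe_comp, Function.comp_apply, LinearMap.toSpanSingleton_apply,
    LinearMap.id_coe, id_eq, map_smul, smul_eq_mul, ← hu]
  rw [Units.inv_mul, mul_one]

theorem bij_of_sub_mem (χ : Module.End R E)
    (h : ∀ x, χ x - x ∈ (IsLocalRing.maximalIdeal R • ⊤ : Submodule R E)) :
    Function.Bijective χ := by
  have hsurj : Function.Surjective χ := by
    rw [← LinearMap.range_eq_top]
    have hle : (⊤ : Submodule R E) ≤ LinearMap.range χ ⊔
        IsLocalRing.maximalIdeal R • (⊤ : Submodule R E) := by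
      intro x _
      have hx : x = χ x - (χ x - x) := (sub_sub_cancel (χ x) x).symm
      rw [hx]
      exact Submodule.sub_mem _ (Submodule.mem_sup_left ⟨x, rfl⟩)
        (Submodule.mem_sup_right (h x))
    have := Submodule.le_of_le_smul_of_le_jacobson_bot
      (Module.Finite.fg_top (R := R) (M := E))
      (IsLocalRing.maximalIdeal_le_jacobson ⊥) hle
    exact top_le_iff.mp this
  exact ⟨OrzechProperty.injective_of_surjective_endomorphism χ hsurj, hsurj⟩

end Aux

/-- If `E` is a finitely generated module over a Noetherian local ring with no free direct
summand, then every endomorphism `I + Σ fᵢ(−)·eᵢ` is an automorphism; in particular every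
element of the image of the natural map `E* ⊗ E → End_R(E)` lies in the Jacobson radical
of `End_R(E)`. -/
theorem stmt0 (R E : Type) [CommRing R] [IsLocalRing R] [IsNoetherianRing R]
    [AddCommGroup E] [Module R E] [Module.Finite R E]
    (hfree : ¬ HasFreeSummand R E) :
    (∀ (n : ℕ) (f : Fin n → Module.Dual R E) (e : Fin n → E),
      Function.Bijective
        (((LinearMap.id : E →ₗ[R] E) + ∑ i, (f i).smulRight (e i)))) ∧
    (∀ φ : Module.End R E, φ ∈ LinearMap.range (dualTensorHom R E E) →
      φ ∈ Ideal.jacobson (⊥ : Ideal (Module.End R E))) := by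
  -- any endomorphism in the range of dualTensorHom has image in m • ⊤
  have hrange : ∀ φ : Module.End R E, φ ∈ LinearMap.range (dualTensorHom R E E) →
      ∀ x, φ x ∈ (IsLocalRing.maximalIdeal R • ⊤ : Submodule R E) := by
    rintro φ ⟨t, rfl⟩ x
    induction t using TensorProduct.induction_on with
    | zero => simp
    | tmul f e =>
      simp only [dualTensorHom_apply]
      exact Submodule.smul_mem_smul (dual_val_mem_max R E hfree f x) trivial
    | add a b ha hb =>
      rw [map_add, LinearMap.add_apply]
      exact Submodule.add_mem _ ha hb
  constructor
  · intro n f e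
    apply bij_of_sub_mem R E
    intro x
    have hmem : (∑ i, (f i).smulRight (e i)) ∈ LinearMap.range (dualTensorHom R E E) :=
      ⟨∑ i, f i ⊗ₜ[R] e i, by
        ext z
        simp [dualTensorHom_apply, LinearMap.sum_apply]⟩
    have := hrange _ hmem x
    simpa using this
  · intro φ hφ
    rw [Ideal.jacobson, Ideal.mem_sInf]
    rintro M ⟨-, hM⟩
    by_contra hφM
    have htop : M ⊔ Ideal.span {φ} = ⊤ := by
      refine hM.out.2 _ (lt_of_le_of_ne le_sup_left fun h => hφM ?_)
      rw [h]
      exact Submodule.mem_sup_right (Ideal.subset_span rfl)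
    have h1 : (1 : Module.End R E) ∈ M ⊔ Ideal.span {φ} := htop ▸ trivial
    obtain ⟨ψ, hψ, c, hc, hsum⟩ := Submodule.mem_sup.mp h1
    obtain ⟨y, rfl⟩ := Ideal.mem_span_singleton'.mp hc
    have hψ_eq : ψ = 1 - y * φ := eq_sub_of_add_eq hsum
    have hψbij : Function.Bijective ψ := by
      apply bij_of_sub_mem R E
      intro x
      rw [hψ_eq]
      have hφx := hrange φ hφ x
      have heq : ((1 - y * φ : Module.End R E)) x - x = -(y (φ x)) := by
        simp [LinearMap.sub_apply, Module.End.mul_apply]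
      rw [heq]
      refine Submodule.neg_mem _ ?_
      have h2 : y (φ x) ∈ Submodule.map y (IsLocalRing.maximalIdeal R • ⊤) :=
        ⟨φ x, hφx, rfl⟩
      rw [Submodule.map_smul''] at h2
      exact Submodule.smul_mono le_rfl le_top h2
    have hunit : IsUnit ψ := (Module.End.isUnit_iff ψ).mpr hψbij
    exact hM.out.1 (M.eq_top_of_isUnit_mem hψ hunit)
end

section
/- For a finitely generated module E over a Noetherian local ring (R, m), the set Hom_R(E, mE) of endomorphisms of E whose image lies in mE is a two-sided ideal of End_R(E) contained in the Jacobson radical of End_R(E). -/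
/-- For a finitely generated module `E` over a Noetherian local ring `(R, m)`, the set
`Hom_R(E, mE)` of endomorphisms with image inside `mE` is a two-sided ideal of
`End_R(E)` contained in its Jacobson radical. -/
theorem stmt1 (R E : Type) [CommRing R] [IsLocalRing R] [IsNoetherianRing R]
    [AddCommGroup E] [Module R E] [Module.Finite R E] :
    ∃ I : TwoSidedIdeal (Module.End R E),
      (∀ φ : Module.End R E,
        φ ∈ I ↔ ∀ x : E, φ x ∈ (IsLocalRing.maximalIdeal R) • (⊤ : Submodule R E)) ∧
      ∀ φ ∈ I, φ ∈ Ideal.jacobson (⊥ : Ideal (Module.End R E)) := by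
  set m := IsLocalRing.maximalIdeal R
  set mE : Submodule R E := m • (⊤ : Submodule R E) with hmE
  -- linear maps preserve mE
  have hpres : ∀ (ψ : Module.End R E) (x : E), x ∈ mE → ψ x ∈ mE := by
    intro ψ x hx
    have : Submodule.map ψ mE ≤ mE := by
      rw [hmE, Submodule.map_smul'']
      exact Submodule.smul_mono le_rfl le_top
    exact this ⟨x, hx, rfl⟩
  refine ⟨TwoSidedIdeal.mk' {φ : Module.End R E | ∀ x : E, φ x ∈ mE}
      (fun x => by simp)
      (fun {f g} hf hg x => by simpa using add_mem (hf x) (hg x))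
      (fun {f} hf x => by simpa using neg_mem (hf x))
      (fun {f g} hg x => hpres f _ (hg x))
      (fun {f g} hf x => hf (g x)), ?_, ?_⟩
  · intro φ
    rw [TwoSidedIdeal.mem_mk']
    rfl
  · intro φ hφ
    rw [TwoSidedIdeal.mem_mk'] at hφ
    rw [Ideal.mem_jacobson_iff]
    intro ψ
    -- f := ψ * φ + 1 is surjective by Nakayama, hence bijective, hence a unit
    set f : Module.End R E := ψ * φ + 1 with hf
    have hsurj : Function.Surjective f := by
      rw [← LinearMap.range_eq_top]
      have h2 : (⊤ : Submodule R E) ≤ LinearMap.range f ⊔ m • (⊤ : Submodule R E) := by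
        intro x _
        have hx : x = f x - ψ (φ x) := by simp [hf]
        rw [hx]
        exact Submodule.sub_mem _ (Submodule.mem_sup_left ⟨x, rfl⟩)
          (Submodule.mem_sup_right (hpres ψ _ (hφ x)))
      have := Submodule.le_of_le_smul_of_le_jacobson_bot
        (Module.Finite.fg_top (R := R) (M := E))
        (le_of_eq (IsLocalRing.jacobson_eq_maximalIdeal (⊥ : Ideal R) bot_ne_top).symm) h2
      exact top_le_iff.mp this
    have hbij : Function.Bijective f :=
      OrzechProperty.bijective_of_surjective_endomorphism f hsurj
    -- turn the bijection into a two-sided inverse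
    let e : E ≃ₗ[R] E := LinearEquiv.ofBijective f hbij
    refine ⟨(e.symm : E →ₗ[R] E), ?_⟩
    have hz : (e.symm : E →ₗ[R] E) * f = 1 := by
      ext x
      exact e.symm_apply_apply x
    rw [show (e.symm : E →ₗ[R] E) * ψ * φ = (e.symm : E →ₗ[R] E) * (ψ * φ) by rw [mul_assoc]]
    have : (e.symm : E →ₗ[R] E) * (ψ * φ) + (e.symm : E →ₗ[R] E) - 1
        = (e.symm : E →ₗ[R] E) * f - 1 := by rw [hf, mul_add, mul_one]
    rw [this, hz, sub_self]
    exact Submodule.zero_mem _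
end

section
/- If the trace ideal E*(E) = R (i.e., E has a free direct summand R·ε with a splitting), then E is a projective left module over Λ = End_R(E): explicitly, if E = Rε ⊕ M then E ≅ Λε and the left annihilator of ε is a left ideal direct summand of Λ. -/
/-- If the trace ideal of `E` is all of `R`, then `E` is a projective module over
`Λ = End_R(E)`; moreover `E` is generated over `Λ` by a single element `ε`
(so `E ≅ Λε`, the annihilator of `ε` splitting off `Λ`). -/
theorem stmt3 (R E : Type) [CommRing R] [IsLocalRing R] [IsNoetherianRing R]
    [AddCommGroup E] [Module R E] [Module.Finite R E]
    (htr : (⨆ f : Module.Dual R E, LinearMap.range f) = (⊤ : Submodule R R)) :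
    Module.Projective (Module.End R E) E ∧
    ∃ ε : E, Submodule.span (Module.End R E) {ε} = (⊤ : Submodule (Module.End R E) E) := by
  -- First find `f : E →ₗ[R] R` and `e : E` with `f e` a unit.
  have hfe : ∃ (f : Module.Dual R E) (e : E), IsUnit (f e) := by
    by_contra h
    push_neg at h
    have hle : (⨆ f : Module.Dual R E, LinearMap.range f) ≤ IsLocalRing.maximalIdeal R := by
      refine iSup_le fun f => ?_
      rintro x ⟨e, rfl⟩
      exact h f e
    rw [htr] at hle
    exact (IsLocalRing.maximalIdeal.isMaximal R).ne_top (top_le_iff.mp hle)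
  obtain ⟨f, e, hu⟩ := hfe
  -- normalize so that `g e = 1`
  set g : Module.Dual R E := (hu.unit⁻¹ : Rˣ) • f with hg
  have hge : g e = 1 := by
    simp [hg, Units.smul_def]
  -- the evaluation map `Λ → E`, `φ ↦ φ e`, as a `Λ`-linear map
  let π : Module.End R E →ₗ[Module.End R E] E :=
    { toFun := fun φ => φ e
      map_add' := fun φ ψ => rfl
      map_smul' := fun φ ψ => rfl }
  -- the section `E → Λ`, `x ↦ (y ↦ g y • x)`
  let s : E →ₗ[Module.End R E] Module.End R E :=
    { toFun := fun x => g.smulRight x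
      map_add' := by
        intro x y
        ext z
        simp [smul_add]
      map_smul' := by
        intro φ x
        ext z
        simp [Module.End.smul_def, Module.End.mul_apply] }
  have hsec : π.comp s = LinearMap.id := by
    ext x
    simp [π, s, hge]
  constructor
  · exact Module.Projective.of_split s π hsec
  · refine ⟨e, ?_⟩
    rw [eq_top_iff]
    intro x _
    have : (s x) • e = x := by
      simp [π, s, hge, Module.End.smul_def]
    rw [← this]
    exact Submodule.smul_mem _ _ (Submodule.mem_span_singleton_self e)
end

section
/- Let R be a Gorenstein local ring and M a perfect R-module with minimal free resolution K of length n. For the module E of k-syzygies of M (1 ≤ k < n), there is an exact sequence 0 → E* ⊗_R E → End_R(E) → End_R(M) → 0. -/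
open LinearMap Module TensorProduct
section Aux
set_option linter.unusedSectionVars false
set_option maxHeartbeats 1000000
set_option synthInstance.maxHeartbeats 1000000



variable {R : Type} [CommRing R]

/-- Factor a linear map through a surjection whose kernel it kills. -/
theorem factor_surj {A B C : Type} [AddCommGroup A] [AddCommGroup B] [AddCommGroup C]
    [Module R A] [Module R B] [Module R C] (s : A →ₗ[R] B) (hs : Function.Surjective s)
    (f : A →ₗ[R] C) (h : ∀ x, s x = 0 → f x = 0) :
    ∃ g : B →ₗ[R] C, ∀ x, g (s x) = f x := by
  classical
  have key : ∀ a a' : A, s a = s a' → f a = f a' := by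
    intro a a' h'
    have h0 : f (a - a') = 0 := h _ (by simp [map_sub, h'])
    rw [map_sub, sub_eq_zero] at h0
    exact h0
  let σ : B → A := Function.surjInv hs
  have hσ : ∀ b, s (σ b) = b := Function.rightInverse_surjInv hs
  refine ⟨⟨⟨fun b => f (σ b), ?_⟩, ?_⟩, ?_⟩
  · intro b b'
    have : f (σ (b + b')) = f (σ b + σ b') := key _ _ (by simp [hσ])
    simpa [map_add] using this
  · intro c b
    have : f (σ (c • b)) = f (c • σ b) := key _ _ (by simp [hσ])
    simpa [map_smul] using this
  · intro x
    exact key _ _ (hσ (s x))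

variable {M : Type} [AddCommGroup M] [Module R M]
variable {K : ℕ → Type} [∀ i, AddCommGroup (K i)] [∀ i, Module R (K i)]
  [∀ i, Module.Free R (K i)] [∀ i, Module.Finite R (K i)]
variable {n' : ℕ} {d : ∀ i, K (i + 1) →ₗ[R] K i} {π : K 0 →ₗ[R] M}

/-- `Hom(M,R) = 0`. -/
theorem dualM_zero (hπ : Function.Surjective π) (hex0 : Function.Exact (d 0) π)
    (hperf0 : Function.Injective (d 0).dualMap) (f : M →ₗ[R] R) : f = 0 := by
  have h1 : (d 0).dualMap (f.comp π) = 0 := by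
    ext x
    simp [hex0.apply_apply_eq_zero x]
  have h2 : f.comp π = 0 := hperf0 (by simpa using h1)
  ext m
  obtain ⟨x, rfl⟩ := hπ m
  simpa using LinearMap.congr_fun h2 x

/-- `Hom(M,F) = 0` for `F` finite free. -/
theorem homM_zero (hπ : Function.Surjective π) (hex0 : Function.Exact (d 0) π)
    (hperf0 : Function.Injective (d 0).dualMap)
    {F : Type} [AddCommGroup F] [Module R F] [Module.Free R F] [Module.Finite R F]
    (f : M →ₗ[R] F) : f = 0 := by
  classical
  have b := Module.Free.chooseBasis R F
  ext m
  have : ∀ i, b.coord i (f m) = 0 := by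
    intro i
    have := dualM_zero hπ hex0 hperf0 ((b.coord i).comp f)
    simpa using LinearMap.congr_fun this m
  refine b.ext_elem fun i => ?_
  simpa [b.coord_apply] using this i

/-- Extension of functionals from a syzygy to the ambient free module. -/
theorem extendFun (hex : ∀ i, i + 1 < n' + 1 → Function.Exact (d (i + 1)) (d i))
    (hperf : ∀ i, i + 1 < n' + 1 → Function.Exact ((d i).dualMap) ((d (i + 1)).dualMap))
    {j : ℕ} (hj : j + 1 ≤ n') (f : ↥(LinearMap.range (d j)) →ₗ[R] R) :
    ∃ h : K j →ₗ[R] R, ∀ e : LinearMap.range (d j), h ↑e = f e := by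
  have hj' : j + 1 < n' + 1 := by omega
  set g : K (j + 1) →ₗ[R] R := f.comp (d j).rangeRestrict with hg
  have h1 : (d (j + 1)).dualMap g = 0 := by
    ext x
    have h0 : d j (d (j + 1) x) = 0 := (hex j hj').apply_apply_eq_zero x
    have : (d j).rangeRestrict (d (j + 1) x) = 0 := Subtype.ext (by simpa using h0)
    simp [hg, this]
  have h2 : g ∈ Set.range (d j).dualMap := by
    rw [(hperf j hj') g] at h1
    exact h1
  obtain ⟨h, hh⟩ := h2
  refine ⟨h, ?_⟩
  rintro ⟨e, x, rfl⟩
  have := LinearMap.congr_fun hh x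
  simp [hg] at this
  exact this

/-- Extension of maps into finite free modules. -/
theorem extendMap (hex : ∀ i, i + 1 < n' + 1 → Function.Exact (d (i + 1)) (d i))
    (hperf : ∀ i, i + 1 < n' + 1 → Function.Exact ((d i).dualMap) ((d (i + 1)).dualMap))
    {j : ℕ} (hj : j + 1 ≤ n')
    {F : Type} [AddCommGroup F] [Module R F] [Module.Free R F] [Module.Finite R F]
    (f : ↥(LinearMap.range (d j)) →ₗ[R] F) :
    ∃ h : K j →ₗ[R] F, ∀ e : LinearMap.range (d j), h ↑e = f e := by
  classical
  have b := Module.Free.chooseBasis R F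
  have H : ∀ i, ∃ h : K j →ₗ[R] R, ∀ e : LinearMap.range (d j),
      h ↑e = (b.coord i).comp f e := fun i => extendFun hex hperf hj _
  choose hs hhs using H
  refine ⟨∑ i, (hs i).smulRight (b i), ?_⟩
  intro e
  have : ∀ i, hs i ↑e = b.coord i (f e) := fun i => by simpa using hhs i e
  simp only [LinearMap.sum_apply, LinearMap.smulRight_apply]
  calc ∑ i, (hs i) ↑e • b i = ∑ i, b.repr (f e) i • b i := by
        refine Finset.sum_congr rfl fun i _ => ?_
        rw [this i, b.coord_apply]
    _ = f e := b.sum_repr (f e)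



/-- Cocycle lemma towards `R`. -/
theorem VR (hperf : ∀ i, i + 1 < n' + 1 → Function.Exact ((d i).dualMap) ((d (i + 1)).dualMap))
    {i : ℕ} (hi : i + 1 ≤ n') (f : K (i + 1) →ₗ[R] R) (hf : f.comp (d (i + 1)) = 0) :
    ∃ g : K i →ₗ[R] R, f = g.comp (d i) := by
  have h1 : (d (i + 1)).dualMap f = 0 := by ext x; simpa using LinearMap.congr_fun hf x
  have h2 : f ∈ Set.range (d i).dualMap := by
    rw [(hperf i (by omega)) f] at h1; exact h1
  obtain ⟨g, hg⟩ := h2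
  exact ⟨g, by ext x; simpa using (LinearMap.congr_fun hg x).symm⟩

/-- Cocycle lemma towards a finite free module. -/
theorem VFree (hperf : ∀ i, i + 1 < n' + 1 → Function.Exact ((d i).dualMap) ((d (i + 1)).dualMap))
    {i : ℕ} (hi : i + 1 ≤ n')
    {F : Type} [AddCommGroup F] [Module R F] [Module.Free R F] [Module.Finite R F]
    (f : K (i + 1) →ₗ[R] F) (hf : f.comp (d (i + 1)) = 0) :
    ∃ g : K i →ₗ[R] F, f = g.comp (d i) := by
  classical
  have b := Module.Free.chooseBasis R F
  have H : ∀ l, ∃ g : K i →ₗ[R] R, (b.coord l).comp f = g.comp (d i) := by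
    intro l
    refine VR hperf hi _ ?_
    ext x
    have h0 : f ((d (i+1)) x) = 0 := by simpa using LinearMap.congr_fun hf x
    simp [h0]
  choose gs hgs using H
  refine ⟨∑ l, (gs l).smulRight (b l), ?_⟩
  ext x
  simp only [LinearMap.coe_comp, Function.comp_apply, LinearMap.sum_apply,
    LinearMap.smulRight_apply]
  calc f x = ∑ l, b.repr (f x) l • b l := (b.sum_repr (f x)).symm
    _ = ∑ l, gs l (d i x) • b l := by
        refine Finset.sum_congr rfl fun l _ => ?_
        have := LinearMap.congr_fun (hgs l) x
        simp only [LinearMap.coe_comp, Function.comp_apply, b.coord_apply] at this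
        rw [this]

/-- The statement `U i` : vanishing of the relevant Ext group, in cocycle form. -/
def Ustmt (d : ∀ i, K (i + 1) →ₗ[R] K i) (i : ℕ) : Prop :=
  ∀ f : K (i + 1) →ₗ[R] ↥(LinearMap.range (d (i + 1))), f.comp (d (i + 1)) = 0 →
    ∃ g : K i →ₗ[R] ↥(LinearMap.range (d (i + 1))), f = g.comp (d i)

theorem Ubase (hperf : ∀ i, i + 1 < n' + 1 → Function.Exact ((d i).dualMap) ((d (i + 1)).dualMap))
    (hinj : Function.Injective (d n')) {i : ℕ} (hi : i + 1 = n') : Ustmt d i := by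
  intro f hf
  obtain rfl : n' = i + 1 := hi.symm
  set e := LinearEquiv.ofInjective (d (i + 1)) hinj with he
  obtain ⟨G, hG⟩ := VFree hperf (le_refl (i+1)) ((e.symm : ↥(LinearMap.range (d (i+1))) →ₗ[R] K (i+2)).comp f)
    (by
      ext x
      have h0 : f ((d (i+1)) x) = 0 := by simpa using LinearMap.congr_fun hf x
      simp [h0])
  refine ⟨(e : K (i+2) →ₗ[R] ↥(LinearMap.range (d (i+1)))).comp G, ?_⟩
  ext x
  have := LinearMap.congr_fun hG x
  simp only [LinearMap.coe_comp, Function.comp_apply, LinearEquiv.coe_coe] at this ⊢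
  rw [← this, e.apply_symm_apply]

theorem Ustep (hex : ∀ i, i + 1 < n' + 1 → Function.Exact (d (i + 1)) (d i))
    (hperf : ∀ i, i + 1 < n' + 1 → Function.Exact ((d i).dualMap) ((d (i + 1)).dualMap))
    {i : ℕ} (hi : i + 2 ≤ n') (ih : Ustmt d (i + 1)) : Ustmt d i := by
  intro f hf
  -- lift f through the range restriction of d (i+1)
  obtain ⟨F, hF⟩ := Module.projective_lifting_property ((d (i+1)).rangeRestrict) f
    (d (i+1)).surjective_rangeRestrict
  have hFe : ∀ y : K (i + 1), (d (i+1)).rangeRestrict (F y) = f y :=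
    fun y => LinearMap.congr_fun hF y
  have h1 : ∀ x : K (i + 2), d (i + 1) (F (d (i + 1) x)) = 0 := by
    intro x
    have h0 : f (d (i + 1) x) = 0 := LinearMap.congr_fun hf x
    have := hFe (d (i + 1) x)
    rw [h0] at this
    simpa using congrArg (Subtype.val) this
  have hmem : ∀ x : K (i + 2), F (d (i + 1) x) ∈ LinearMap.range (d (i + 2)) := by
    intro x
    exact ((hex (i + 1) (by omega)) _).mp (h1 x)
  set u : K (i + 2) →ₗ[R] ↥(LinearMap.range (d (i + 2))) :=
    LinearMap.codRestrict _ (F.comp (d (i + 1))) hmem with hu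
  have hu0 : u.comp (d (i + 2)) = 0 := by
    ext x
    have h2 : d (i + 1) (d (i + 2) x) = 0 := (hex (i + 1) (by omega)).apply_apply_eq_zero x
    simp [hu, LinearMap.codRestrict_apply, h2]
  obtain ⟨v, hv⟩ := ih u hu0
  have hvx : ∀ x : K (i + 2), (u x : K (i + 2)) = v (d (i + 1) x) := by
    intro x; exact congrArg Subtype.val (LinearMap.congr_fun hv x)
  set F' : K (i + 1) →ₗ[R] K (i + 2) :=
    F - (LinearMap.range (d (i + 2))).subtype.comp v with hF'
  have hF'0 : F'.comp (d (i + 1)) = 0 := by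
    ext x
    have := hvx x
    simp only [hu, LinearMap.codRestrict_apply, LinearMap.coe_comp, Function.comp_apply] at this
    simp [hF', this]
  obtain ⟨G, hG⟩ := VFree hperf (by omega) F' hF'0
  refine ⟨((d (i+1)).rangeRestrict).comp G, ?_⟩
  ext x
  have hGx : F' x = G (d i x) := LinearMap.congr_fun hG x
  have : (d (i+1)).rangeRestrict (F' x) = (d (i+1)).rangeRestrict (F x) - 0 := by
    rw [hF']
    simp only [LinearMap.sub_apply, map_sub, LinearMap.coe_comp, Function.comp_apply]
    congr 1
    apply Subtype.ext
    have hker : d (i + 1) ((v x : K (i + 2))) = 0 := by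
      obtain ⟨y, hy⟩ := (v x).2
      rw [← hy]
      exact (hex (i + 1) (by omega)).apply_apply_eq_zero y
    simpa using hker
  rw [sub_zero] at this
  simp only [LinearMap.coe_comp, Function.comp_apply, ← hGx, this, hFe]

theorem Ulem (hex : ∀ i, i + 1 < n' + 1 → Function.Exact (d (i + 1)) (d i))
    (hperf : ∀ i, i + 1 < n' + 1 → Function.Exact ((d i).dualMap) ((d (i + 1)).dualMap))
    (hinj : Function.Injective (d n')) :
    ∀ c i, i + 1 + c = n' → Ustmt d i := by
  intro c
  induction c with
  | zero => intro i hi; exact Ubase hperf hinj (by omega)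
  | succ c ih =>
    intro i hi
    exact Ustep hex hperf (by omega) (ih (i + 1) (by omega))



/-- One step of descent of an endomorphism along the resolution. -/
def StepP (d : ∀ i, K (i + 1) →ₗ[R] K i) (j : ℕ)
    (φ : Module.End R ↥(LinearMap.range (d (j + 1))))
    (ψ : Module.End R ↥(LinearMap.range (d j))) : Prop :=
  ∃ Φ : K (j + 1) →ₗ[R] K (j + 1),
    (∀ e : LinearMap.range (d (j + 1)), Φ ↑e = ↑(φ e)) ∧
    ∀ x : K (j + 1), ψ ((d j).rangeRestrict x) = (d j).rangeRestrict (Φ x)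

/-- Final step of descent, to an endomorphism of `M`. -/
def Step0P (d : ∀ i, K (i + 1) →ₗ[R] K i) (π : K 0 →ₗ[R] M)
    (φ : Module.End R ↥(LinearMap.range (d 0))) (ψ : Module.End R M) : Prop :=
  ∃ Φ : K 0 →ₗ[R] K 0,
    (∀ e : LinearMap.range (d 0), Φ ↑e = ↑(φ e)) ∧
    ∀ x : K 0, ψ (π x) = π (Φ x)

/-- Full descent relation from level `j` down to `M`. -/
def RelP (d : ∀ i, K (i + 1) →ₗ[R] K i) (π : K 0 →ₗ[R] M) :
    ∀ j, Module.End R ↥(LinearMap.range (d j)) → Module.End R M → Prop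
  | 0 => Step0P d π
  | (j + 1) => fun φ ψ => ∃ χ, StepP d j φ χ ∧ RelP d π j χ ψ

/-- `φ` factors through the free cover. -/
def FFP (d : ∀ i, K (i + 1) →ₗ[R] K i) (j : ℕ)
    (φ : Module.End R ↥(LinearMap.range (d j))) : Prop :=
  ∃ Θ : ↥(LinearMap.range (d j)) →ₗ[R] K (j + 1), ∀ e, φ e = (d j).rangeRestrict (Θ e)

def FFMP (π : K 0 →ₗ[R] M) (ψ : Module.End R M) : Prop :=
  ∃ Θ : M →ₗ[R] K 0, ∀ x : M, ψ x = π (Θ x)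


theorem mem_ker_of_range (hex : ∀ i, i + 1 < n' + 1 → Function.Exact (d (i + 1)) (d i))
    {j : ℕ} (hj : j + 1 < n' + 1) (e : ↥(LinearMap.range (d (j + 1)))) :
    d j ↑e = 0 := by
  obtain ⟨y, hy⟩ := e.2
  rw [← hy]
  exact (hex j hj).apply_apply_eq_zero y

theorem rr_zero_of_range (hex : ∀ i, i + 1 < n' + 1 → Function.Exact (d (i + 1)) (d i))
    {j : ℕ} (hj : j + 1 < n' + 1) (e : ↥(LinearMap.range (d (j + 1)))) :
    (d j).rangeRestrict ↑e = 0 :=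
  Subtype.ext (by simpa using mem_ker_of_range hex hj e)

theorem step_add {j : ℕ} {φ φ' ψ ψ'} (h : StepP d j φ ψ) (h' : StepP d j φ' ψ') :
    StepP d j (φ + φ') (ψ + ψ') := by
  obtain ⟨Φ, h1, h2⟩ := h
  obtain ⟨Φ', h1', h2'⟩ := h'
  exact ⟨Φ + Φ', fun e => by simp [h1 e, h1' e],
    fun x => by simp [h2 x, h2' x]⟩

theorem step_smul {j : ℕ} (c : R) {φ ψ} (h : StepP d j φ ψ) :
    StepP d j (c • φ) (c • ψ) := by
  obtain ⟨Φ, h1, h2⟩ := h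
  exact ⟨c • Φ, fun e => by simp [h1 e], fun x => by simp [h2 x]⟩

theorem step0_add {φ φ' ψ ψ'} (h : Step0P d π φ ψ) (h' : Step0P d π φ' ψ') :
    Step0P d π (φ + φ') (ψ + ψ') := by
  obtain ⟨Φ, h1, h2⟩ := h
  obtain ⟨Φ', h1', h2'⟩ := h'
  exact ⟨Φ + Φ', fun e => by simp [h1 e, h1' e], fun x => by simp [h2 x, h2' x]⟩

theorem step0_smul (c : R) {φ ψ} (h : Step0P d π φ ψ) :
    Step0P d π (c • φ) (c • ψ) := by
  obtain ⟨Φ, h1, h2⟩ := h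
  exact ⟨c • Φ, fun e => by simp [h1 e], fun x => by simp [h2 x]⟩

theorem rel_add (j : ℕ) : ∀ (φ φ' : Module.End R ↥(LinearMap.range (d j)))
    (ψ ψ' : Module.End R M), RelP d π j φ ψ → RelP d π j φ' ψ' →
    RelP d π j (φ + φ') (ψ + ψ') := by
  induction j with
  | zero => exact fun φ φ' ψ ψ' h h' => step0_add h h'
  | succ j ih =>
    rintro φ φ' ψ ψ' ⟨χ, hs, hr⟩ ⟨χ', hs', hr'⟩
    exact ⟨χ + χ', step_add hs hs', ih _ _ _ _ hr hr'⟩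

theorem rel_smul (j : ℕ) (c : R) : ∀ (φ : Module.End R ↥(LinearMap.range (d j)))
    (ψ : Module.End R M), RelP d π j φ ψ → RelP d π j (c • φ) (c • ψ) := by
  induction j with
  | zero => exact fun φ ψ h => step0_smul c h
  | succ j ih =>
    rintro φ ψ ⟨χ, hs, hr⟩
    exact ⟨c • χ, step_smul c hs, ih _ _ hr⟩

theorem rel_sub (j : ℕ) (φ φ' : Module.End R ↥(LinearMap.range (d j)))
    (ψ ψ' : Module.End R M) (h : RelP d π j φ ψ) (h' : RelP d π j φ' ψ') :
    RelP d π j (φ - φ') (ψ - ψ') := by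
  have h2 := rel_add j φ ((-1 : R) • φ') ψ ((-1 : R) • ψ') h (rel_smul j (-1 : R) φ' ψ' h')
  have e1 : (-1 : R) • φ' = -φ' := neg_one_smul R φ'
  have e2 : (-1 : R) • ψ' = -ψ' := neg_one_smul R ψ'
  rw [e1, e2, ← sub_eq_add_neg, ← sub_eq_add_neg] at h2
  exact h2

theorem step_exists (hex : ∀ i, i + 1 < n' + 1 → Function.Exact (d (i + 1)) (d i))
    (hperf : ∀ i, i + 1 < n' + 1 → Function.Exact ((d i).dualMap) ((d (i + 1)).dualMap))
    {j : ℕ} (hj : j + 2 ≤ n') (φ : Module.End R ↥(LinearMap.range (d (j + 1)))) :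
    ∃ ψ, StepP d j φ ψ := by
  obtain ⟨Φ, hΦ⟩ := extendMap hex hperf (j := j + 1) (by omega)
    ((LinearMap.range (d (j + 1))).subtype.comp φ)
  have side : ∀ x, (d j).rangeRestrict x = 0 → (((d j).rangeRestrict).comp Φ) x = 0 := by
    intro x hx
    have hx' : d j x = 0 := by simpa [Subtype.ext_iff] using hx
    have hxm : x ∈ LinearMap.range (d (j + 1)) := ((hex j (by omega)) x).mp hx'
    have : Φ x = ↑(φ ⟨x, hxm⟩) := hΦ ⟨x, hxm⟩
    simp only [LinearMap.coe_comp, Function.comp_apply, this]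
    exact rr_zero_of_range hex (by omega) _
  obtain ⟨ψ, hψ⟩ := factor_surj ((d j).rangeRestrict) (d j).surjective_rangeRestrict
    (((d j).rangeRestrict).comp Φ) side
  exact ⟨ψ, ⟨Φ, fun e => by simpa using hΦ e, fun x => by exact hψ x⟩⟩

theorem step0_exists (hπ : Function.Surjective π) (hex0 : Function.Exact (d 0) π)
    (hex : ∀ i, i + 1 < n' + 1 → Function.Exact (d (i + 1)) (d i))
    (hperf : ∀ i, i + 1 < n' + 1 → Function.Exact ((d i).dualMap) ((d (i + 1)).dualMap))
    (h1n : 1 ≤ n') (φ : Module.End R ↥(LinearMap.range (d 0))) :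
    ∃ ψ, Step0P d π φ ψ := by
  obtain ⟨Φ, hΦ⟩ := extendMap hex hperf (j := 0) h1n
    ((LinearMap.range (d 0)).subtype.comp φ)
  have side : ∀ x, π x = 0 → (π.comp Φ) x = 0 := by
    intro x hx
    have hxm : x ∈ LinearMap.range (d 0) := (hex0 x).mp hx
    have : Φ x = ↑(φ ⟨x, hxm⟩) := hΦ ⟨x, hxm⟩
    simp only [LinearMap.coe_comp, Function.comp_apply, this]
    exact (hex0 _).mpr (φ ⟨x, hxm⟩).2
  obtain ⟨ψ, hψ⟩ := factor_surj π hπ (π.comp Φ) side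
  exact ⟨ψ, ⟨Φ, fun e => by simpa using hΦ e, fun x => by simpa using hψ x⟩⟩

theorem rel_exists (hπ : Function.Surjective π) (hex0 : Function.Exact (d 0) π)
    (hex : ∀ i, i + 1 < n' + 1 → Function.Exact (d (i + 1)) (d i))
    (hperf : ∀ i, i + 1 < n' + 1 → Function.Exact ((d i).dualMap) ((d (i + 1)).dualMap)) :
    ∀ (j : ℕ), j + 1 ≤ n' → ∀ φ, ∃ ψ, RelP d π j φ ψ := by
  intro j
  induction j with
  | zero => exact fun hj φ => step0_exists hπ hex0 hex hperf hj φ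
  | succ j ih =>
    intro hj φ
    obtain ⟨χ, hχ⟩ := step_exists hex hperf (by omega) φ
    obtain ⟨ψ, hψ⟩ := ih (by omega) χ
    exact ⟨ψ, χ, hχ, hψ⟩

theorem ff_step_diff (hex : ∀ i, i + 1 < n' + 1 → Function.Exact (d (i + 1)) (d i))
    {j : ℕ} (hj : j + 1 < n' + 1) {φ ψ ψ'} (h : StepP d j φ ψ) (h' : StepP d j φ ψ') :
    FFP d j (ψ - ψ') := by
  obtain ⟨Φ, h1, h2⟩ := h
  obtain ⟨Φ', h1', h2'⟩ := h'
  have side : ∀ x, (d j).rangeRestrict x = 0 → (Φ - Φ') x = 0 := by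
    intro x hx
    have hx' : d j x = 0 := by simpa [Subtype.ext_iff] using hx
    have hxm : x ∈ LinearMap.range (d (j + 1)) := ((hex j hj) x).mp hx'
    have e1 : Φ x = ↑(φ ⟨x, hxm⟩) := h1 ⟨x, hxm⟩
    have e2 : Φ' x = ↑(φ ⟨x, hxm⟩) := h1' ⟨x, hxm⟩
    simp [e1, e2]
  obtain ⟨Θ, hΘ⟩ := factor_surj ((d j).rangeRestrict) (d j).surjective_rangeRestrict
    (Φ - Φ') side
  refine ⟨Θ, ?_⟩
  rintro e
  obtain ⟨x, rfl⟩ := (d j).surjective_rangeRestrict e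
  have hx := hΘ x
  calc (ψ - ψ') ((d j).rangeRestrict x)
      = (d j).rangeRestrict (Φ x) - (d j).rangeRestrict (Φ' x) := by
        simp [h2 x, h2' x]
    _ = (d j).rangeRestrict ((Φ - Φ') x) := by simp
    _ = (d j).rangeRestrict (Θ ((d j).rangeRestrict x)) := by rw [hx]


theorem ff0_step_diff (hπ : Function.Surjective π) (hex0 : Function.Exact (d 0) π)
    {φ ψ ψ'} (h : Step0P d π φ ψ) (h' : Step0P d π φ ψ') :
    FFMP π (ψ - ψ') := by
  obtain ⟨Φ, h1, h2⟩ := h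
  obtain ⟨Φ', h1', h2'⟩ := h'
  have side : ∀ x, π x = 0 → (Φ - Φ') x = 0 := by
    intro x hx
    have hxm : x ∈ LinearMap.range (d 0) := (hex0 x).mp hx
    have e1 : Φ x = ↑(φ ⟨x, hxm⟩) := h1 ⟨x, hxm⟩
    have e2 : Φ' x = ↑(φ ⟨x, hxm⟩) := h1' ⟨x, hxm⟩
    simp [e1, e2]
  obtain ⟨Θ, hΘ⟩ := factor_surj π hπ (Φ - Φ') side
  refine ⟨Θ, ?_⟩
  intro m
  obtain ⟨x, rfl⟩ := hπ m
  have hx := hΘ x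
  calc (ψ - ψ') (π x) = π (Φ x) - π (Φ' x) := by simp [h2 x, h2' x]
    _ = π ((Φ - Φ') x) := by simp
    _ = π (Θ (π x)) := by rw [hx]

theorem ff_propagate (hex : ∀ i, i + 1 < n' + 1 → Function.Exact (d (i + 1)) (d i))
    (hperf : ∀ i, i + 1 < n' + 1 → Function.Exact ((d i).dualMap) ((d (i + 1)).dualMap))
    {j : ℕ} (hj : j + 2 ≤ n') {φ ψ} (hff : FFP d (j + 1) φ) (hst : StepP d j φ ψ) :
    FFP d j ψ := by
  obtain ⟨Θ, hΘ⟩ := hff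
  obtain ⟨Θ', hΘ'⟩ := extendMap hex hperf (j := j + 1) (by omega) Θ
  have hstep0 : StepP d j φ 0 := by
    refine ⟨(d (j + 1)).comp Θ', ?_, ?_⟩
    · intro e
      have : Θ' ↑e = Θ e := hΘ' e
      simp only [LinearMap.coe_comp, Function.comp_apply, this, hΘ e]
      rfl
    · intro x
      have h0 : d j (d (j + 1) (Θ' x)) = 0 :=
        (hex j (by omega)).apply_apply_eq_zero (Θ' x)
      simp only [LinearMap.zero_apply, LinearMap.coe_comp, Function.comp_apply]
      exact (Subtype.ext (by simpa using h0)).symm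
  have := ff_step_diff hex (by omega) hst hstep0
  simpa using this

theorem ff0_propagate (hπ : Function.Surjective π) (hex0 : Function.Exact (d 0) π)
    (hex : ∀ i, i + 1 < n' + 1 → Function.Exact (d (i + 1)) (d i))
    (hperf : ∀ i, i + 1 < n' + 1 → Function.Exact ((d i).dualMap) ((d (i + 1)).dualMap))
    (h1n : 1 ≤ n') {φ ψ} (hff : FFP d 0 φ) (hst : Step0P d π φ ψ) :
    FFMP π ψ := by
  obtain ⟨Θ, hΘ⟩ := hff
  obtain ⟨Θ', hΘ'⟩ := extendMap hex hperf (j := 0) h1n Θ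
  have hstep0 : Step0P d π φ 0 := by
    refine ⟨(d 0).comp Θ', ?_, ?_⟩
    · intro e
      have : Θ' ↑e = Θ e := hΘ' e
      simp only [LinearMap.coe_comp, Function.comp_apply, this, hΘ e]
      rfl
    · intro x
      have h0 : π (d 0 (Θ' x)) = 0 := hex0.apply_apply_eq_zero (Θ' x)
      simp [h0]
  have := ff0_step_diff hπ hex0 hst hstep0
  simpa using this

theorem ffm_zero (hπ : Function.Surjective π) (hex0 : Function.Exact (d 0) π)
    (hperf0 : Function.Injective (d 0).dualMap) {ψ} (h : FFMP π ψ) : ψ = 0 := by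
  obtain ⟨Θ, hΘ⟩ := h
  have : Θ = 0 := homM_zero hπ hex0 hperf0 Θ
  ext m
  simp [hΘ m, this]

theorem rel_ff_zero (hπ : Function.Surjective π) (hex0 : Function.Exact (d 0) π)
    (hex : ∀ i, i + 1 < n' + 1 → Function.Exact (d (i + 1)) (d i))
    (hperf : ∀ i, i + 1 < n' + 1 → Function.Exact ((d i).dualMap) ((d (i + 1)).dualMap))
    (hperf0 : Function.Injective (d 0).dualMap) :
    ∀ (j : ℕ), j + 1 ≤ n' → ∀ φ ψ, FFP d j φ → RelP d π j φ ψ → ψ = 0 := by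
  intro j
  induction j with
  | zero =>
    intro hj φ ψ hff hrel
    exact ffm_zero hπ hex0 hperf0 (ff0_propagate hπ hex0 hex hperf hj hff hrel)
  | succ j ih =>
    rintro hj φ ψ hff ⟨χ, hst, hrel⟩
    exact ih (by omega) χ ψ (ff_propagate hex hperf (by omega) hff hst) hrel

theorem rel_unique (hπ : Function.Surjective π) (hex0 : Function.Exact (d 0) π)
    (hex : ∀ i, i + 1 < n' + 1 → Function.Exact (d (i + 1)) (d i))
    (hperf : ∀ i, i + 1 < n' + 1 → Function.Exact ((d i).dualMap) ((d (i + 1)).dualMap))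
    (hperf0 : Function.Injective (d 0).dualMap)
    {j : ℕ} (hj : j + 1 ≤ n') {φ ψ ψ'} (h : RelP d π j φ ψ) (h' : RelP d π j φ ψ') :
    ψ = ψ' := by
  have hsub : RelP d π j (φ - φ) (ψ - ψ') := rel_sub j φ φ ψ ψ' h h'
  rw [sub_self] at hsub
  have hff : FFP d j (0 : Module.End R ↥(LinearMap.range (d j))) :=
    ⟨0, fun e => by simp⟩
  have := rel_ff_zero hπ hex0 hex hperf hperf0 j hj 0 (ψ - ψ') hff hsub
  rwa [sub_eq_zero] at this

theorem rel_kernel (hπ : Function.Surjective π) (hex0 : Function.Exact (d 0) π)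
    (hex : ∀ i, i + 1 < n' + 1 → Function.Exact (d (i + 1)) (d i)) :
    ∀ (j : ℕ), j + 1 ≤ n' → ∀ φ, RelP d π j φ 0 → FFP d j φ := by
  intro j
  induction j with
  | zero =>
    rintro hj φ ⟨Φ, h1, h2⟩
    have hmem : ∀ x : K 0, Φ x ∈ LinearMap.range (d 0) := by
      intro x
      have : π (Φ x) = 0 := by simpa using (h2 x).symm
      exact (hex0 _).mp this
    set Φ' : K 0 →ₗ[R] ↥(LinearMap.range (d 0)) := LinearMap.codRestrict _ Φ hmem with hΦ'
    obtain ⟨Λ, hΛ⟩ := Module.projective_lifting_property ((d 0).rangeRestrict) Φ'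
      (d 0).surjective_rangeRestrict
    refine ⟨Λ.comp (LinearMap.range (d 0)).subtype, ?_⟩
    intro e
    have h3 : Φ' ↑e = (d 0).rangeRestrict (Λ ↑e) := (LinearMap.congr_fun hΛ (↑e : K 0)).symm
    have h4 : (Φ' ↑e : K 0) = ↑(φ e) := by simp [hΦ', h1 e]
    apply Subtype.ext
    rw [← h4, h3]
    rfl
  | succ j ih =>
    rintro hj φ ⟨χ, ⟨Φ, h1, h2⟩, hrel⟩
    obtain ⟨Θ, hΘ⟩ := ih (by omega) χ hrel
    set Φ₂ : K (j + 1) →ₗ[R] K (j + 1) := Φ - Θ.comp ((d j).rangeRestrict) with hΦ₂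
    have hmem : ∀ x : K (j + 1), Φ₂ x ∈ LinearMap.range (d (j + 1)) := by
      intro x
      have e1 : (d j).rangeRestrict (Θ ((d j).rangeRestrict x)) = χ ((d j).rangeRestrict x) :=
        (hΘ _).symm
      have e2 : χ ((d j).rangeRestrict x) = (d j).rangeRestrict (Φ x) := h2 x
      have : (d j).rangeRestrict (Φ₂ x) = 0 := by
        simp only [hΦ₂, LinearMap.sub_apply, map_sub, LinearMap.coe_comp,
          Function.comp_apply, e1, e2]
        exact sub_self _
      have hker : d j (Φ₂ x) = 0 := by simpa [Subtype.ext_iff] using this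
      exact ((hex j (by omega)) _).mp hker
    set Φ' : K (j + 1) →ₗ[R] ↥(LinearMap.range (d (j + 1))) :=
      LinearMap.codRestrict _ Φ₂ hmem with hΦ'
    obtain ⟨Λ, hΛ⟩ := Module.projective_lifting_property ((d (j + 1)).rangeRestrict) Φ'
      (d (j + 1)).surjective_rangeRestrict
    refine ⟨Λ.comp (LinearMap.range (d (j + 1))).subtype, ?_⟩
    intro e
    have h3 : Φ' ↑e = (d (j + 1)).rangeRestrict (Λ ↑e) :=
      (LinearMap.congr_fun hΛ (↑e : K (j + 1))).symm
    have hq : (d j).rangeRestrict (↑e : K (j + 1)) = 0 := rr_zero_of_range hex (by omega) e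
    have h4 : (Φ' ↑e : K (j + 1)) = ↑(φ e) := by
      simp [hΦ', hΦ₂, hq, h1 e]
    apply Subtype.ext
    rw [← h4, h3]
    rfl

theorem rel_surj (hπ : Function.Surjective π) (hex0 : Function.Exact (d 0) π)
    (hex : ∀ i, i + 1 < n' + 1 → Function.Exact (d (i + 1)) (d i)) :
    ∀ (j : ℕ), j + 1 ≤ n' → ∀ ψ : Module.End R M, ∃ φ, RelP d π j φ ψ := by
  intro j
  induction j with
  | zero =>
    intro hj ψ
    obtain ⟨Φ, hΦ⟩ := Module.projective_lifting_property π (ψ.comp π) hπ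
    have hΦx : ∀ x, π (Φ x) = ψ (π x) := fun x => LinearMap.congr_fun hΦ x
    have hmem : ∀ x ∈ LinearMap.range (d 0), Φ x ∈ LinearMap.range (d 0) := by
      intro x hx
      have hx0 : π x = 0 := (hex0 x).mpr hx
      have : π (Φ x) = 0 := by rw [hΦx x, hx0, map_zero]
      exact (hex0 _).mp this
    refine ⟨Φ.restrict hmem, ⟨Φ, ?_, ?_⟩⟩
    · intro e; rfl
    · intro x; exact (hΦx x).symm
  | succ j ih =>
    intro hj ψ
    obtain ⟨χ, hχ⟩ := ih (by omega) ψ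
    obtain ⟨Φ, hΦ⟩ := Module.projective_lifting_property ((d j).rangeRestrict)
      (χ.comp ((d j).rangeRestrict)) (d j).surjective_rangeRestrict
    have hΦx : ∀ x, (d j).rangeRestrict (Φ x) = χ ((d j).rangeRestrict x) :=
      fun x => LinearMap.congr_fun hΦ x
    have hmem : ∀ x ∈ LinearMap.range (d (j + 1)), Φ x ∈ LinearMap.range (d (j + 1)) := by
      intro x hx
      have hq : (d j).rangeRestrict x = 0 := rr_zero_of_range hex (by omega) ⟨x, hx⟩
      have : (d j).rangeRestrict (Φ x) = 0 := by rw [hΦx x, hq, map_zero]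
      have hker : d j (Φ x) = 0 := by simpa [Subtype.ext_iff] using this
      exact ((hex j (by omega)) _).mp hker
    refine ⟨Φ.restrict hmem, χ, ⟨Φ, ?_, ?_⟩, hχ⟩
    · intro e; rfl
    · intro x; exact (hΦx x).symm


/-- Naturality of `dualTensorHom` in the first variable. -/
theorem dth_comp {A B C : Type} [AddCommGroup A] [AddCommGroup B] [AddCommGroup C]
    [Module R A] [Module R B] [Module R C] (u : A →ₗ[R] B)
    (t : Module.Dual R B ⊗[R] C) :
    dualTensorHom R A C (LinearMap.rTensor C u.dualMap t) =
      (dualTensorHom R B C t).comp u := by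
  induction t using TensorProduct.induction_on with
  | zero => simp
  | tmul f c =>
    ext a
    simp [LinearMap.rTensor_tmul, dualTensorHom_apply]
  | add a b iha ihb =>
    simp [map_add, iha, ihb, LinearMap.add_comp]

theorem ff_dth (j : ℕ) (t : Module.Dual R ↥(LinearMap.range (d j)) ⊗[R] ↥(LinearMap.range (d j))) :
    FFP d j (dualTensorHom R ↥(LinearMap.range (d j)) ↥(LinearMap.range (d j)) t) := by
  induction t using TensorProduct.induction_on with
  | zero => exact ⟨0, by simp⟩
  | tmul f e =>
    obtain ⟨y, hy⟩ := e.2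
    refine ⟨f.smulRight y, ?_⟩
    intro x
    have he : (d j).rangeRestrict y = e := Subtype.ext (by simpa using hy)
    simp [dualTensorHom_apply, ← he]
  | add a b iha ihb =>
    obtain ⟨Θa, ha⟩ := iha
    obtain ⟨Θb, hb⟩ := ihb
    refine ⟨Θa + Θb, ?_⟩
    intro e
    simp [ha e, hb e]

theorem range_dth_of_ff (j : ℕ) (φ : Module.End R ↥(LinearMap.range (d j)))
    (h : FFP d j φ) :
    ∃ t, dualTensorHom R ↥(LinearMap.range (d j)) ↥(LinearMap.range (d j)) t = φ := by
  classical
  obtain ⟨Θ, hΘ⟩ := h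
  have b := Module.Free.chooseBasis R (K (j + 1))
  refine ⟨∑ i, ((b.coord i).comp Θ) ⊗ₜ[R] ((d j).rangeRestrict (b i)), ?_⟩
  refine LinearMap.ext fun x => ?_
  rw [map_sum]
  simp only [LinearMap.sum_apply, dualTensorHom_apply, LinearMap.coe_comp,
    Function.comp_apply, b.coord_apply]
  rw [hΘ x]
  calc ∑ i, b.repr (Θ x) i • (d j).rangeRestrict (b i)
      = (d j).rangeRestrict (∑ i, b.repr (Θ x) i • b i) := by
        rw [map_sum]; simp [map_smul]
    _ = (d j).rangeRestrict (Θ x) := by rw [b.sum_repr]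

theorem dth_injective (hπ : Function.Surjective π) (hex0 : Function.Exact (d 0) π)
    (hex : ∀ i, i + 1 < n' + 1 → Function.Exact (d (i + 1)) (d i))
    (hinj : Function.Injective (d n'))
    (hperf0 : Function.Injective (d 0).dualMap)
    (hperf : ∀ i, i + 1 < n' + 1 → Function.Exact ((d i).dualMap) ((d (i + 1)).dualMap))
    {k' : ℕ} (hk : k' + 1 ≤ n') :
    Function.Injective
      (dualTensorHom R ↥(LinearMap.range (d k')) ↥(LinearMap.range (d k'))) := by
  classical
  suffices H : ∀ t, dualTensorHom R ↥(LinearMap.range (d k')) ↥(LinearMap.range (d k')) t = 0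
      → t = 0 by
    intro t1 t2 h
    have := H (t1 - t2) (by rw [map_sub, h, sub_self])
    rwa [sub_eq_zero] at this
  have hρsurj : Function.Surjective
      ((LinearMap.range (d k')).subtype.dualMap :
        Module.Dual R (K k') →ₗ[R] Module.Dual R ↥(LinearMap.range (d k'))) := by
    intro f
    obtain ⟨h, hh⟩ := extendFun hex hperf (j := k') hk f
    exact ⟨h, LinearMap.ext fun e => hh e⟩
  intro t ht
  obtain ⟨s, hs⟩ := LinearMap.rTensor_surjective (↥(LinearMap.range (d k'))) hρsurj t
  have hcomm := dth_comp (LinearMap.range (d k')).subtype s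
  have hΦι : (dualTensorHom R (K k') ↥(LinearMap.range (d k')) s).comp
      (LinearMap.range (d k')).subtype = 0 := by
    rw [← hcomm, hs]; exact ht
  have hΦι' : ∀ e : ↥(LinearMap.range (d k')),
      dualTensorHom R (K k') ↥(LinearMap.range (d k')) s ↑e = 0 :=
    fun e => LinearMap.congr_fun hΦι e
  have hΦd : (dualTensorHom R (K k') ↥(LinearMap.range (d k')) s).comp (d k') = 0 := by
    refine LinearMap.ext fun x => ?_
    have hxm : d k' x ∈ LinearMap.range (d k') := ⟨x, rfl⟩
    simpa using hΦι' ⟨d k' x, hxm⟩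
  cases k' with
  | zero =>
    have side : ∀ x, π x = 0 →
        dualTensorHom R (K 0) ↥(LinearMap.range (d 0)) s x = 0 := by
      intro x hx
      have hxm : x ∈ LinearMap.range (d 0) := (hex0 x).mp hx
      exact hΦι' ⟨x, hxm⟩
    obtain ⟨Ψ, hΨ⟩ := factor_surj π hπ (dualTensorHom R (K 0) ↥(LinearMap.range (d 0)) s) side
    have hΨ0 : (LinearMap.range (d 0)).subtype.comp Ψ = 0 := homM_zero hπ hex0 hperf0 _
    have hΨz : ∀ m, Ψ m = 0 := by
      intro m
      apply Subtype.ext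
      simpa using LinearMap.congr_fun hΨ0 m
    have hΦ0 : dualTensorHom R (K 0) ↥(LinearMap.range (d 0)) s = 0 := by
      refine LinearMap.ext fun x => ?_
      rw [← hΨ x, hΨz]
      rfl
    have hs0 : s = 0 := by
      apply (dualTensorHomEquivOfBasis (N := ↥(LinearMap.range (d 0)))
        (Module.Free.chooseBasis R (K 0))).injective
      rw [map_zero, dualTensorHomEquivOfBasis_apply, hΦ0]
    rw [← hs, hs0, map_zero]
  | succ i0 =>
    obtain ⟨c, hc⟩ : ∃ c, i0 + 1 + c = n' := ⟨n' - (i0 + 1), by omega⟩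
    have hU : Ustmt d i0 := Ulem hex hperf hinj c i0 hc
    obtain ⟨g, hg⟩ := hU _ hΦd
    have hwg := dualTensorHomEquivOfBasis_symm_cancel_right
      (N := ↥(LinearMap.range (d (i0 + 1)))) (Module.Free.chooseBasis R (K i0)) g
    have hs2 : LinearMap.rTensor (↥(LinearMap.range (d (i0 + 1)))) ((d i0).dualMap)
        ((dualTensorHomEquivOfBasis (N := ↥(LinearMap.range (d (i0 + 1))))
          (Module.Free.chooseBasis R (K i0))).symm g) = s := by
      apply (dualTensorHomEquivOfBasis (N := ↥(LinearMap.range (d (i0 + 1))))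
        (Module.Free.chooseBasis R (K (i0 + 1)))).injective
      rw [dualTensorHomEquivOfBasis_apply, dualTensorHomEquivOfBasis_apply]
      rw [dth_comp (d i0) _, hwg, ← hg]
    have hcomp : ((LinearMap.range (d (i0 + 1))).subtype.dualMap).comp ((d i0).dualMap)
        = 0 := by
      refine LinearMap.ext fun v => ?_
      refine LinearMap.ext fun e => ?_
      have h0 : d i0 ↑e = 0 := mem_ker_of_range hex (by omega) e
      simp [LinearMap.dualMap_apply, h0]
    rw [← hs, ← hs2, ← LinearMap.rTensor_comp_apply, hcomp]
    simp

end Aux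

/-- A Noetherian local ring is Gorenstein if it is Cohen–Macaulay (a maximal regular
sequence of length dim exists in the maximal ideal) and the Artinian quotient by such a
regular sequence has one-dimensional socle. -/
def IsGorensteinLocalRing (R : Type*) [CommRing R] [IsLocalRing R] : Prop :=
  IsNoetherianRing R ∧ ∃ rs : List R, (∀ r ∈ rs, r ∈ IsLocalRing.maximalIdeal R) ∧
    RingTheory.Sequence.IsRegular R rs ∧ (rs.length : WithBot ℕ∞) = ringKrullDim R ∧
    ∃ x : R ⧸ Ideal.ofList rs, x ≠ 0 ∧ (∀ a ∈ IsLocalRing.maximalIdeal R, a • x = 0) ∧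
      ∀ y : R ⧸ Ideal.ofList rs, (∀ a ∈ IsLocalRing.maximalIdeal R, a • y = 0) →
        ∃ c : R, y = c • x

/-- Let `R` be a Gorenstein local ring and `M` a perfect module with minimal free
resolution `0 → K_n → ⋯ → K_0 → M → 0` of length `n = n' + 1` (perfection: the dualized
complex is exact except at the right end, i.e. `Ext^i(M,R) = 0` for `i < n`).  For the
module `E` of `k`-syzygies of `M` (`k = k' + 1`, `1 ≤ k < n`), namely the image of
`K_k → K_{k-1}`, there is an exact sequence `0 → E* ⊗ E → End_R(E) → End_R(M) → 0`,
the first map being the natural one. -/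
theorem stmt11 (R : Type) [CommRing R] [IsLocalRing R] (hG : IsGorensteinLocalRing R)
    (M : Type) [AddCommGroup M] [Module R M] [Module.Finite R M]
    (n' : ℕ)
    (K : ℕ → Type) [∀ i, AddCommGroup (K i)] [∀ i, Module R (K i)]
    [∀ i, Module.Free R (K i)] [∀ i, Module.Finite R (K i)]
    (d : ∀ i, K (i + 1) →ₗ[R] K i) (π : K 0 →ₗ[R] M)
    (hπ : Function.Surjective π) (hex0 : Function.Exact (d 0) π)
    (hex : ∀ i, i + 1 < n' + 1 → Function.Exact (d (i + 1)) (d i))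
    (hinj : Function.Injective (d n'))
    (hmin : ∀ i, LinearMap.range (d i) ≤
      (IsLocalRing.maximalIdeal R) • (⊤ : Submodule R (K i)))
    (hperf0 : Function.Injective (d 0).dualMap)
    (hperf : ∀ i, i + 1 < n' + 1 →
      Function.Exact ((d i).dualMap) ((d (i + 1)).dualMap))
    (k' : ℕ) (hk : k' + 1 < n' + 1)
    :
    Function.Injective (dualTensorHom R (LinearMap.range (d k')) (LinearMap.range (d k'))) ∧
    ∃ g : Module.End R (LinearMap.range (d k')) →ₗ[R] Module.End R M,
      Function.Surjective g ∧
      Function.Exact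
        (dualTensorHom R (LinearMap.range (d k')) (LinearMap.range (d k'))) g := by
  classical
  have hk' : k' + 1 ≤ n' := by omega
  constructor
  · exact dth_injective hπ hex0 hex hinj hperf0 hperf hk'
  · have total := rel_exists hπ hex0 hex hperf k' hk'
    choose gfun hg using total
    have uniq : ∀ φ ψ, RelP d π k' φ ψ → gfun φ = ψ :=
      fun φ ψ h => rel_unique hπ hex0 hex hperf hperf0 hk' (hg φ) h
    refine ⟨{ toFun := gfun, map_add' := ?_, map_smul' := ?_ }, ?_, ?_⟩
    · intro a b
      exact uniq _ _ (rel_add k' a b (gfun a) (gfun b) (hg a) (hg b))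
    · intro c a
      simpa using uniq _ _ (rel_smul k' c a (gfun a) (hg a))
    · intro ψ
      obtain ⟨φ, hφ⟩ := rel_surj hπ hex0 hex k' hk' ψ
      exact ⟨φ, uniq _ _ hφ⟩
    · rw [LinearMap.exact_iff]
      ext φ
      simp only [LinearMap.mem_ker, LinearMap.mem_range]
      constructor
      · intro h0
        have h0' : gfun φ = 0 := h0
        have hrel : RelP d π k' φ 0 := h0' ▸ hg φ
        have hff := rel_kernel hπ hex0 hex k' hk' φ hrel
        exact range_dth_of_ff k' φ hff
      · rintro ⟨t, rfl⟩
        have hff := ff_dth k' t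
        exact rel_ff_zero hπ hex0 hex hperf hperf0 k' hk' _ _ hff (hg _)
end

section
/- Let R be a local ring and E = E_1 ⊕ E_2 a finitely generated module such that Hom(E_j, E_i)·Hom(E_i, E_j) ⊆ Hom(E_j, m E_j) for i ≠ j. Then the Jacobson radical of End_R(E) is the set of matrices [[a, c], [b, d]] with a ∈ J_1, d ∈ J_2, b ∈ Hom(E_1, E_2), c ∈ Hom(E_2, E_1), where J_i is the Jacobson radical of End_R(E_i). -/
section Aux
variable {R M : Type} [CommRing R] [AddCommGroup M] [Module R M]

lemma aux_isUnit_of_surjective [IsNoetherianRing R] [Module.Finite R M]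
    {f : Module.End R M} (h : Function.Surjective f) : IsUnit f :=
  (Module.End.isUnit_iff f).2
    ⟨OrzechProperty.injective_of_surjective_endomorphism f h, h⟩

lemma aux_isUnit_of_congr [IsLocalRing R] [IsNoetherianRing R] [Module.Finite R M]
    {f g : Module.End R M} (hg : IsUnit g)
    (h : ∀ x, f x - g x ∈ (IsLocalRing.maximalIdeal R) • (⊤ : Submodule R M)) :
    IsUnit f := by
  apply aux_isUnit_of_surjective
  rw [← LinearMap.range_eq_top]
  rw [← top_le_iff]
  refine Submodule.le_of_le_smul_of_le_jacobson_bot (Module.Finite.fg_top)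
    (IsLocalRing.maximalIdeal_le_jacobson ⊥) ?_
  intro x _
  obtain ⟨y, hy⟩ := ((Module.End.isUnit_iff g).1 hg).2 x
  have : x = f y - (f y - g y) := by rw [hy]; abel
  rw [this]
  exact Submodule.sub_mem _ (Submodule.mem_sup_left ⟨y, rfl⟩)
    (Submodule.mem_sup_right (h y))

lemma aux_mem_jacobson_iff [IsNoetherianRing R] [Module.Finite R M]
    {f : Module.End R M} :
    f ∈ Ideal.jacobson (⊥ : Ideal (Module.End R M)) ↔ ∀ g, IsUnit (g * f + 1) := by
  constructor
  · intro hf g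
    by_cases hsp : Ideal.span {g * f + 1} = ⊤
    · have h1 : (1 : Module.End R M) ∈ Ideal.span {g * f + 1} := hsp ▸ Submodule.mem_top
      obtain ⟨z, hz⟩ := Submodule.mem_span_singleton.1 h1
      rw [smul_eq_mul] at hz
      have hzu : IsUnit z := aux_isUnit_of_surjective (fun x => ⟨(g*f+1) x, by
        rw [← Module.End.mul_apply, hz, Module.End.one_apply]⟩)
      have : g * f + 1 = ↑hzu.unit⁻¹ := by
        have := congrArg (fun w => (↑hzu.unit⁻¹ : Module.End R M) * w) hz
        simpa [← mul_assoc] using this.symm.symm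
      rw [this]; exact Units.isUnit _
    · obtain ⟨J, hJmax, hJle⟩ := Ideal.exists_le_maximal _ hsp
      exfalso
      have hfJ : f ∈ J := Ideal.mem_sInf.1 hf ⟨bot_le, hJmax⟩
      have h1 : g * f + 1 ∈ J := hJle (Ideal.subset_span rfl)
      have : (1 : Module.End R M) ∈ J := by
        have := J.sub_mem h1 (J.mul_mem_left g hfJ)
        simpa using this
      exact hJmax.ne_top ((Ideal.eq_top_iff_one _).2 this)
  · intro h
    apply Ideal.mem_sInf.2
    rintro J ⟨-, hJmax⟩
    by_contra hfJ
    have hsup : J ⊔ Ideal.span {f} = ⊤ := by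
      by_contra hne
      have := hJmax.eq_of_le hne le_sup_left
      exact hfJ (this ▸ Submodule.mem_sup_right (Ideal.subset_span rfl))
    have h1 : (1 : Module.End R M) ∈ J ⊔ Ideal.span {f} := hsup ▸ Submodule.mem_top
    obtain ⟨j, hj, s, hs, hjs⟩ := Submodule.mem_sup.1 h1
    obtain ⟨z, hz⟩ := Submodule.mem_span_singleton.1 hs
    rw [smul_eq_mul] at hz
    have hju : IsUnit j := by
      have : j = (-z) * f + 1 := by rw [← hjs, ← hz, neg_mul]; abel
      rw [this]; exact h (-z)
    exact hJmax.ne_top (J.eq_top_of_isUnit_mem hj hju)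

end Aux

section Aux2
variable {R E₁ E₂ : Type} [CommRing R] [AddCommGroup E₁] [Module R E₁]
  [AddCommGroup E₂] [Module R E₂]

lemma aux_pair (L : E₁ × E₂ →ₗ[R] E₁ × E₂) (p : E₁) (q : E₂) :
    L (p, q) = ((LinearMap.fst R E₁ E₂ ∘ₗ L ∘ₗ LinearMap.inl R E₁ E₂) p
        + (LinearMap.fst R E₁ E₂ ∘ₗ L ∘ₗ LinearMap.inr R E₁ E₂) q,
      (LinearMap.snd R E₁ E₂ ∘ₗ L ∘ₗ LinearMap.inl R E₁ E₂) p
        + (LinearMap.snd R E₁ E₂ ∘ₗ L ∘ₗ LinearMap.inr R E₁ E₂) q) := by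
  have h : (p, q) = ((p, 0) : E₁ × E₂) + (0, q) := by simp
  rw [h, map_add]
  simp [Prod.ext_iff]

end Aux2
/-- Let `E = E₁ ⊕ E₂` over a Noetherian local ring `(R, m)` with the transition
conditions `Hom(E_j, E_i)·Hom(E_i, E_j) ⊆ Hom(E_j, m E_j)` for `i ≠ j`.  Then the
Jacobson radical of `End_R(E)`, in the matrix description, consists exactly of the
`φ` whose diagonal components lie in the Jacobson radicals of `End(E₁)` and `End(E₂)`
(the off-diagonal entries being arbitrary). -/
theorem stmt15 (R E₁ E₂ : Type) [CommRing R] [IsLocalRing R] [IsNoetherianRing R]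
    [AddCommGroup E₁] [Module R E₁] [Module.Finite R E₁]
    [AddCommGroup E₂] [Module R E₂] [Module.Finite R E₂]
    (h12 : ∀ (f : E₁ →ₗ[R] E₂) (g : E₂ →ₗ[R] E₁) (x : E₁),
      g (f x) ∈ (IsLocalRing.maximalIdeal R) • (⊤ : Submodule R E₁))
    (h21 : ∀ (f : E₂ →ₗ[R] E₁) (g : E₁ →ₗ[R] E₂) (x : E₂),
      g (f x) ∈ (IsLocalRing.maximalIdeal R) • (⊤ : Submodule R E₂)) :
    ∀ φ : Module.End R (E₁ × E₂),
      φ ∈ Ideal.jacobson (⊥ : Ideal (Module.End R (E₁ × E₂))) ↔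
      ((LinearMap.fst R E₁ E₂ ∘ₗ φ ∘ₗ LinearMap.inl R E₁ E₂) ∈
          Ideal.jacobson (⊥ : Ideal (Module.End R E₁)) ∧
        (LinearMap.snd R E₁ E₂ ∘ₗ φ ∘ₗ LinearMap.inr R E₁ E₂) ∈
          Ideal.jacobson (⊥ : Ideal (Module.End R E₂))) := by
  intro φ
  set a := LinearMap.fst R E₁ E₂ ∘ₗ φ ∘ₗ LinearMap.inl R E₁ E₂ with ha
  set b₀ := LinearMap.snd R E₁ E₂ ∘ₗ φ ∘ₗ LinearMap.inl R E₁ E₂ with hb₀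
  set c₀ := LinearMap.fst R E₁ E₂ ∘ₗ φ ∘ₗ LinearMap.inr R E₁ E₂ with hc₀
  set d := LinearMap.snd R E₁ E₂ ∘ₗ φ ∘ₗ LinearMap.inr R E₁ E₂ with hd
  simp only [aux_mem_jacobson_iff]
  constructor
  · intro h
    constructor
    · intro u
      set ψ := LinearMap.inl R E₁ E₂ ∘ₗ u ∘ₗ LinearMap.fst R E₁ E₂ with hψ
      have hΦ := (Module.End.isUnit_iff _).1 (h ψ)
      set Φ := ψ * φ + 1 with hΦdef
      have key1 : ∀ p : E₁, Φ (p, 0) = ((u * a + 1) p, 0) := by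
        intro p
        simp [hΦdef, hψ, ha, Module.End.mul_apply, LinearMap.add_apply,
          Module.End.one_apply, Prod.ext_iff]
      have key2 : ∀ z : E₁ × E₂, (Φ z).2 = z.2 := by
        intro z
        simp [hΦdef, hψ, Module.End.mul_apply, LinearMap.add_apply, Module.End.one_apply]
      rw [Module.End.isUnit_iff]
      constructor
      · intro p₁ p₂ hpp
        have : Φ (p₁, 0) = Φ (p₂, 0) := by rw [key1, key1, hpp]
        exact congrArg Prod.fst (hΦ.injective this)
      · intro w
        obtain ⟨z, hz⟩ := hΦ.surjective (w, 0)
        have hz2 : z.2 = 0 := by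
          have := congrArg Prod.snd hz
          rwa [key2] at this
        refine ⟨z.1, ?_⟩
        have hez : ((z.1, 0) : E₁ × E₂) = z := by
          rw [← hz2]
        have := key1 z.1
        rw [hez, hz] at this
        exact (congrArg Prod.fst this).symm
    · intro v
      set ψ := LinearMap.inr R E₁ E₂ ∘ₗ v ∘ₗ LinearMap.snd R E₁ E₂ with hψ
      have hΦ := (Module.End.isUnit_iff _).1 (h ψ)
      set Φ := ψ * φ + 1 with hΦdef
      have key1 : ∀ q : E₂, Φ (0, q) = (0, (v * d + 1) q) := by
        intro q
        simp [hΦdef, hψ, hd, Module.End.mul_apply, LinearMap.add_apply,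
          Module.End.one_apply, Prod.ext_iff]
      have key2 : ∀ z : E₁ × E₂, (Φ z).1 = z.1 := by
        intro z
        simp [hΦdef, hψ, Module.End.mul_apply, LinearMap.add_apply, Module.End.one_apply]
      rw [Module.End.isUnit_iff]
      constructor
      · intro q₁ q₂ hqq
        have : Φ (0, q₁) = Φ (0, q₂) := by rw [key1, key1, hqq]
        exact congrArg Prod.snd (hΦ.injective this)
      · intro w
        obtain ⟨z, hz⟩ := hΦ.surjective (0, w)
        have hz1 : z.1 = 0 := by
          have := congrArg Prod.fst hz
          rwa [key2] at this
        refine ⟨z.2, ?_⟩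
        have hez : ((0, z.2) : E₁ × E₂) = z := by
          rw [← hz1]
        have := key1 z.2
        rw [hez, hz] at this
        exact (congrArg Prod.snd this).symm
  · rintro ⟨hA, hD⟩ ψ
    set u := LinearMap.fst R E₁ E₂ ∘ₗ ψ ∘ₗ LinearMap.inl R E₁ E₂ with hu
    set bψ := LinearMap.snd R E₁ E₂ ∘ₗ ψ ∘ₗ LinearMap.inl R E₁ E₂ with hbψ
    set cψ := LinearMap.fst R E₁ E₂ ∘ₗ ψ ∘ₗ LinearMap.inr R E₁ E₂ with hcψ
    set v := LinearMap.snd R E₁ E₂ ∘ₗ ψ ∘ₗ LinearMap.inr R E₁ E₂ with hv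
    set x : Module.End R E₁ := u ∘ₗ a + cψ ∘ₗ b₀ + 1 with hx
    set c : E₂ →ₗ[R] E₁ := u ∘ₗ c₀ + cψ ∘ₗ d with hc
    set b : E₁ →ₗ[R] E₂ := bψ ∘ₗ a + v ∘ₗ b₀ with hb
    set y : Module.End R E₂ := bψ ∘ₗ c₀ + v ∘ₗ d + 1 with hy
    set Φ := ψ * φ + 1 with hΦdef
    have hΦ : ∀ (p : E₁) (q : E₂), Φ (p, q) = (x p + c q, b p + y q) := by
      intro p q
      have h1 : Φ (p, q) = ψ (φ (p, q)) + (p, q) := by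
        simp [hΦdef, Module.End.mul_apply, LinearMap.add_apply, Module.End.one_apply]
      rw [h1, aux_pair φ p q, aux_pair ψ]
      simp only [hx, hc, hb, hy, ← ha, ← hb₀, ← hc₀, ← hd, ← hu, ← hbψ, ← hcψ, ← hv,
        LinearMap.add_apply, LinearMap.comp_apply, Module.End.one_apply, map_add,
        Prod.mk_add_mk, Prod.mk.injEq]
      constructor <;> abel
    -- x is a unit
    have hxu : IsUnit x := by
      refine aux_isUnit_of_congr (hA u) fun p => ?_
      have e : x p - (u * a + 1) p = cψ (b₀ p) := by
        simp only [hx, LinearMap.add_apply, Module.End.mul_apply, Module.End.one_apply,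
          LinearMap.comp_apply]
        abel
      rw [e]
      exact h12 b₀ cψ p
    set xi : Module.End R E₁ := ↑hxu.unit⁻¹ with hxidef
    have hmul1 : xi * x = 1 := by
      rw [hxidef]; exact hxu.val_inv_mul
    have hmul2 : x * xi = 1 := by
      rw [hxidef]; exact hxu.mul_val_inv
    have hx1 : ∀ p, xi (x p) = p := fun p => by
      simpa using DFunLike.congr_fun hmul1 p
    have hx2 : ∀ p, x (xi p) = p := fun p => by
      simpa using DFunLike.congr_fun hmul2 p
    -- Schur complement
    set S : Module.End R E₂ := y - b ∘ₗ (xi ∘ₗ c) with hS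
    have hSq : ∀ q, S q = y q - b (xi (c q)) := by
      intro q
      simp [hS]
    have hSu : IsUnit S := by
      refine aux_isUnit_of_congr (hD v) fun q => ?_
      have e : S q - (v * d + 1) q = bψ (c₀ q) - b ((xi ∘ₗ c) q) := by
        rw [hSq]
        simp only [hy, LinearMap.add_apply, Module.End.mul_apply, Module.End.one_apply,
          LinearMap.comp_apply]
        abel
      rw [e]
      exact Submodule.sub_mem _ (h21 c₀ bψ q) (h21 (xi ∘ₗ c) b q)
    set Si : Module.End R E₂ := ↑hSu.unit⁻¹ with hSidef
    have hmulS1 : Si * S = 1 := by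
      rw [hSidef]; exact hSu.val_inv_mul
    have hmulS2 : S * Si = 1 := by
      rw [hSidef]; exact hSu.mul_val_inv
    have hs1 : ∀ q, Si (S q) = q := fun q => by
      simpa using DFunLike.congr_fun hmulS1 q
    have hs2 : ∀ q, S (Si q) = q := fun q => by
      simpa using DFunLike.congr_fun hmulS2 q
    rw [Module.End.isUnit_iff]
    constructor
    · -- injective
      have hker : ∀ z : E₁ × E₂, Φ z = 0 → z = 0 := by
        rintro ⟨p, q⟩ hz
        rw [hΦ p q, show (0 : E₁ × E₂) = ((0 : E₁), (0 : E₂)) from rfl,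
          Prod.mk.injEq] at hz
        obtain ⟨e1, e2⟩ := hz
        have hcq : xi (c q) = -p := by
          have h5 : c q = -(x p) := eq_neg_of_add_eq_zero_right e1
          rw [h5, map_neg, hx1]
        have hq0 : q = 0 := by
          have hq : S q = 0 := by
            rw [hSq, hcq, map_neg, sub_neg_eq_add, add_comm]
            exact e2
          rw [← hs1 q, hq, map_zero]
        have hp0 : p = 0 := by
          rw [hq0, map_zero, add_zero] at e1
          rw [← hx1 p, e1, map_zero]
        rw [hp0, hq0]
        rfl
      intro z₁ z₂ hz
      have h0 : Φ (z₁ - z₂) = 0 := by rw [map_sub, hz, sub_self]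
      have := hker _ h0
      exact sub_eq_zero.1 this
    · -- surjective
      rintro ⟨w₁, w₂⟩
      set q := Si (w₂ - b (xi w₁)) with hqdef
      set p := xi (w₁ - c q) with hpdef
      refine ⟨(p, q), ?_⟩
      rw [hΦ p q, Prod.mk.injEq]
      constructor
      · rw [hpdef, hx2]
        abel
      · have hbp : b p = b (xi w₁) - b (xi (c q)) := by
          rw [hpdef, map_sub, map_sub]
        rw [hbp]
        have : b (xi w₁) - b (xi (c q)) + y q = b (xi w₁) + S q := by
          rw [hSq]
          abel
        rw [this, hqdef, hs2]
        abel
end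

section
/- Let R be a Noetherian local ring, M a finitely generated module without free summand, and F = R^n a free module. Then the Jacobson radical of Λ = End_R(F ⊕ M) equals the matrix ideal [[m·End(F), Hom(M,F)], [Hom(F,M), J_0]], where J_0 is the Jacobson radical of End(M). Consequently, a non-free module with a free direct summand is never a local module. -/
open IsLocalRing

/-- Noncommutative characterization of the Jacobson radical of ⊥. -/
lemma aux_mem_jacobson_bot_iff {Λ : Type*} [Ring Λ] {x : Λ} :
    x ∈ Ideal.jacobson (⊥ : Ideal Λ) ↔ ∀ y, IsUnit (1 + y * x) := by
  constructor
  · intro hx y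
    obtain ⟨z, hz⟩ := Ideal.mem_jacobson_iff.1 hx y
    rw [Ideal.mem_bot, sub_eq_zero] at hz
    have h1 : z * (1 + y * x) = 1 := by rw [mul_add, mul_one, ← mul_assoc, add_comm]; exact hz
    obtain ⟨w, hw⟩ := Ideal.mem_jacobson_iff.1 hx (-(z * y))
    rw [Ideal.mem_bot, sub_eq_zero] at hw
    have h2 : w * z = 1 := by
      have hz' : z = 1 + -(z * y) * x := by
        have h' : z * (y * x) + z = 1 := by rw [← mul_assoc]; exact hz
        rw [neg_mul, mul_assoc, ← sub_eq_add_neg]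
        exact eq_sub_of_add_eq' h'
      calc w * z = w * (1 + -(z*y) * x) := by rw [← hz']
        _ = w * (-(z*y)) * x + w := by rw [mul_add, mul_one, mul_assoc, add_comm]
        _ = 1 := hw
    have h3 : (1 + y * x) * z = 1 := by
      have : w = 1 + y * x := by
        calc w = w * (z * (1 + y * x)) := by rw [h1, mul_one]
          _ = (w * z) * (1 + y * x) := by rw [mul_assoc]
          _ = 1 + y * x := by rw [h2, one_mul]
      rw [← this]; exact h2
    exact ⟨⟨1 + y * x, z, h3, h1⟩, rfl⟩
  · intro h
    refine Ideal.mem_jacobson_iff.2 fun y' => ?_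
    obtain ⟨u, hu⟩ := h y'
    refine ⟨(↑u⁻¹ : Λ), ?_⟩
    rw [Ideal.mem_bot, sub_eq_zero]
    have : (↑u⁻¹ : Λ) * (1 + y' * x) = 1 := by rw [← hu]; exact u.inv_mul
    calc (↑u⁻¹ : Λ) * y' * x + ↑u⁻¹ = ↑u⁻¹ * (1 + y' * x) := by
          rw [mul_add, mul_one, ← mul_assoc, add_comm]
      _ = 1 := this

lemma aux_isUnit_one_add_swap {Λ : Type*} [Ring Λ] {a b : Λ} (h : IsUnit (1 + a * b)) :
    IsUnit (1 + b * a) := by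
  obtain ⟨u, hu⟩ := h
  set w := (↑u⁻¹ : Λ) with hw
  have h1 : (1 + a * b) * w = 1 := by rw [← hu]; exact u.mul_inv
  have h2 : w * (1 + a * b) = 1 := by rw [← hu]; exact u.inv_mul
  refine ⟨⟨1 + b * a, 1 - b * w * a, ?_, ?_⟩, rfl⟩
  · have e1 : (1 + b * a) * (1 - b * w * a) = 1 - b * ((1 + a * b) * w - 1) * a := by
      noncomm_ring
    rw [e1, h1]; simp
  · have e2 : (1 - b * w * a) * (1 + b * a) = 1 - b * (w * (1 + a * b) - 1) * a := by
      noncomm_ring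
    rw [e2, h2]; simp

lemma aux_jac_mul_right {Λ : Type*} [Ring Λ] {x : Λ} (hx : x ∈ Ideal.jacobson (⊥ : Ideal Λ))
    (y : Λ) : x * y ∈ Ideal.jacobson (⊥ : Ideal Λ) := by
  rw [aux_mem_jacobson_bot_iff] at hx ⊢
  intro z
  have h := hx (y * z)
  have : (1 : Λ) + y * z * x = 1 + y * (z * x) := by rw [mul_assoc]
  rw [this] at h
  have := aux_isUnit_one_add_swap h
  rwa [mul_assoc] at this

section ModAux

variable {R : Type*} [CommRing R] {N N' : Type*} [AddCommGroup N] [Module R N]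
  [AddCommGroup N'] [Module R N']

lemma aux_apply_mem_smul_top (I : Ideal R) (g : N →ₗ[R] N') {v : N}
    (hv : v ∈ I • (⊤ : Submodule R N)) : g v ∈ I • (⊤ : Submodule R N') := by
  have h1 : g v ∈ (I • (⊤ : Submodule R N)).map g := Submodule.mem_map_of_mem hv
  rw [Submodule.map_smul''] at h1
  exact Submodule.smul_mono le_rfl le_top h1

/-- Nakayama: an endomorphism that is the identity mod `m` is surjective. -/
lemma aux_surj [IsLocalRing R] [Module.Finite R N] (f : Module.End R N)
    (hf : ∀ v, f v - v ∈ (maximalIdeal R) • (⊤ : Submodule R N)) :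
    Function.Surjective f := by
  rw [← LinearMap.range_eq_top]
  rw [eq_top_iff]
  refine Submodule.le_of_le_smul_of_le_jacobson_bot Module.Finite.fg_top
    (IsLocalRing.maximalIdeal_le_jacobson ⊥) ?_
  intro v _
  have hv : v = f v - (f v - v) := by abel
  rw [hv]
  exact Submodule.sub_mem _ (Submodule.mem_sup_left ⟨v, rfl⟩)
    (Submodule.mem_sup_right (hf v))

lemma aux_unit_of_one_add_small [IsLocalRing R] [IsNoetherianRing R] [Module.Finite R N]
    (f : Module.End R N) (hf : ∀ v, f v - v ∈ (maximalIdeal R) • (⊤ : Submodule R N)) :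
    IsUnit f := by
  have hsurj : Function.Surjective f := aux_surj f hf
  have hinj : Function.Injective f :=
    IsNoetherian.injective_of_surjective_endomorphism f hsurj
  exact (Module.End.isUnit_iff f).2 ⟨hinj, hsurj⟩

/-- an endomorphism with range in `m • ⊤` lies in the Jacobson radical of the
endomorphism ring. -/
lemma aux_small_mem_jacobson [IsLocalRing R] [IsNoetherianRing R] [Module.Finite R N]
    (f : Module.End R N) (hf : ∀ v, f v ∈ (maximalIdeal R) • (⊤ : Submodule R N)) :
    f ∈ Ideal.jacobson (⊥ : Ideal (Module.End R N)) := by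
  rw [aux_mem_jacobson_bot_iff]
  intro y
  refine aux_unit_of_one_add_small _ fun v => ?_
  have : (1 + y * f) v - v = y (f v) := by
    simp [LinearMap.add_apply, Module.End.mul_apply]
  rw [this]
  exact aux_apply_mem_smul_top _ y (hf v)

lemma aux_blocks {P Q : Type*} [AddCommGroup P] [Module R P] [AddCommGroup Q] [Module R Q]
    (χ : (P × Q) →ₗ[R] (P × Q)) (u : P) (v : Q) :
    χ (u, v) = ((LinearMap.fst R P Q ∘ₗ χ ∘ₗ LinearMap.inl R P Q) u
        + (LinearMap.fst R P Q ∘ₗ χ ∘ₗ LinearMap.inr R P Q) v,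
      (LinearMap.snd R P Q ∘ₗ χ ∘ₗ LinearMap.inl R P Q) u
        + (LinearMap.snd R P Q ∘ₗ χ ∘ₗ LinearMap.inr R P Q) v) := by
  have h : (u, v) = ((u, 0) : P × Q) + (0, v) := by simp
  rw [h, map_add]
  simp [Prod.ext_iff]

end ModAux

section PiAux

variable {R : Type*} [CommRing R] {n : ℕ}

lemma aux_mem_smul_top_pi_iff (I : Ideal R) (v : Fin n → R) :
    v ∈ I • (⊤ : Submodule R (Fin n → R)) ↔ ∀ i, v i ∈ I := by
  constructor
  · intro hv i
    have hle : I • (⊤ : Submodule R R) ≤ I := Submodule.smul_le.2 fun r hr x _ => by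
      simpa [smul_eq_mul] using I.mul_mem_right x hr
    exact hle (aux_apply_mem_smul_top I (LinearMap.proj (R := R) (φ := fun _ : Fin n => R) i) hv)
  · intro hv
    have h := pi_eq_sum_univ v
    rw [h]
    refine Submodule.sum_mem _ fun i _ => Submodule.smul_mem_smul (hv i) trivial

end PiAux

section EndAux

variable {R : Type*} [CommRing R] {n : ℕ}

lemma aux_mem_smul_top_end_iff (I : Ideal R) (a : Module.End R (Fin n → R)) :
    a ∈ I • (⊤ : Submodule R (Module.End R (Fin n → R))) ↔
      ∀ v, a v ∈ I • (⊤ : Submodule R (Fin n → R)) := by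
  constructor
  · intro ha v
    refine Submodule.smul_induction_on ha ?_ ?_
    · intro r hr x _
      have : (r • x) v = r • (x v) := rfl
      rw [this]
      exact Submodule.smul_mem_smul hr trivial
    · intro x y hx hy
      have : (x + y) v = x v + y v := rfl
      rw [this]
      exact Submodule.add_mem _ hx hy
  · intro ha
    classical
    -- a = ∑ j, ∑ i, (a (e j) i) • (single i ∘ proj j)
    have key : a = ∑ j : Fin n, ∑ i : Fin n,
        (a (fun k => if j = k then (1:R) else 0) i) •
          ((LinearMap.single R (fun _ : Fin n => R) i) ∘ₗ
            (LinearMap.proj (R := R) (φ := fun _ : Fin n => R) j)) := by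
      refine LinearMap.ext fun w => funext fun k => ?_
      have hw : a w = ∑ i, w i • a (fun j => if i = j then (1:R) else 0) := by
        conv_lhs => rw [pi_eq_sum_univ w]
        rw [map_sum]
        simp only [map_smul]
      rw [hw]
      simp only [Finset.sum_apply, Pi.smul_apply, smul_eq_mul, LinearMap.sum_apply,
        LinearMap.smul_apply, LinearMap.coe_comp, Function.comp_apply, LinearMap.proj_apply,
        LinearMap.coe_single, Pi.single_apply, mul_ite, mul_zero]
      simp only [Finset.sum_ite_eq, Finset.mem_univ, if_true]
      exact Finset.sum_congr rfl fun i _ => mul_comm _ _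
    rw [key]
    refine Submodule.sum_mem _ fun j _ => Submodule.sum_mem _ fun i _ => ?_
    refine Submodule.smul_mem_smul ?_ trivial
    have := (aux_mem_smul_top_pi_iff I _).1 (ha (fun k => if j = k then (1:R) else 0)) i
    exact this

end EndAux

section KeyAux

variable {R : Type*} [CommRing R] [IsLocalRing R] {M : Type*} [AddCommGroup M] [Module R M]

/-- If `M` has no free direct summand, every linear functional on `M` takes values
in the maximal ideal. -/
lemma aux_functional_mem (hM : ¬ ∃ (g : M →ₗ[R] R) (s : R →ₗ[R] M), g.comp s = LinearMap.id)
    (g : M →ₗ[R] R) (v : M) : g v ∈ maximalIdeal R := by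
  by_contra h
  rw [IsLocalRing.mem_maximalIdeal, mem_nonunits_iff, not_not] at h
  obtain ⟨u, hu⟩ := h
  refine hM ⟨g, LinearMap.toSpanSingleton R M (((u⁻¹ : Rˣ) : R) • v), LinearMap.ext_ring ?_⟩
  simp only [LinearMap.comp_apply, LinearMap.toSpanSingleton_apply, one_smul, map_smul,
    LinearMap.id_apply]
  rw [← hu, smul_eq_mul, u.inv_mul]

/-- If `M` has no free direct summand, every map `M → Rⁿ` has range inside `m • ⊤`. -/
lemma aux_hom_small {n : ℕ}
    (hM : ¬ ∃ (g : M →ₗ[R] R) (s : R →ₗ[R] M), g.comp s = LinearMap.id)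
    (h : M →ₗ[R] (Fin n → R)) (v : M) :
    h v ∈ (maximalIdeal R) • (⊤ : Submodule R (Fin n → R)) := by
  rw [aux_mem_smul_top_pi_iff]
  intro i
  exact aux_functional_mem hM ((LinearMap.proj (R := R) (φ := fun _ : Fin n => R) i) ∘ₗ h) v

end KeyAux

lemma aux_split {R : Type*} [CommRing R] {P Q T : Type*} [AddCommGroup P] [Module R P]
    [AddCommGroup Q] [Module R Q] [AddCommGroup T] [Module R T]
    (ψ : (P × Q) →ₗ[R] T) (z : P × Q) : ψ z = ψ (z.1, 0) + ψ (0, z.2) := by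
  rw [← map_add]
  congr 1
  simp

/-- `E` is a *local module*: its endomorphism ring has a unique maximal two-sided ideal,
equivalently a greatest proper two-sided ideal. -/
def IsLocalModule (R E : Type*) [CommRing R] [AddCommGroup E] [Module R E] : Prop :=
  ∃ I : TwoSidedIdeal (Module.End R E), I ≠ ⊤ ∧
    ∀ J : TwoSidedIdeal (Module.End R E), J ≠ ⊤ → J ≤ I

/-- Let `(R, m)` be a Noetherian local ring, `M ≠ 0` a finitely generated module without
free summand and `F = R^n` free (`n ≥ 1`).  Then the Jacobson radical of
`Λ = End_R(F ⊕ M)` is the matrix ideal `[[m·End(F), Hom(M,F)], [Hom(F,M), J₀]]` with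
`J₀` the Jacobson radical of `End(M)`; consequently `F ⊕ M` — a non-free module with a
free summand — is not a local module. -/
theorem stmt16 (R M : Type) [CommRing R] [IsLocalRing R] [IsNoetherianRing R]
    [AddCommGroup M] [Module R M] [Module.Finite R M] [Nontrivial M]
    (hM : ¬ HasFreeSummand R M) (n : ℕ) (hn : 1 ≤ n) :
    (∀ φ : Module.End R ((Fin n → R) × M),
      φ ∈ Ideal.jacobson (⊥ : Ideal (Module.End R ((Fin n → R) × M))) ↔
      ((LinearMap.fst R (Fin n → R) M ∘ₗ φ ∘ₗ LinearMap.inl R (Fin n → R) M) ∈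
          (IsLocalRing.maximalIdeal R) •
            (⊤ : Submodule R (Module.End R (Fin n → R))) ∧
        (LinearMap.snd R (Fin n → R) M ∘ₗ φ ∘ₗ LinearMap.inr R (Fin n → R) M) ∈
          Ideal.jacobson (⊥ : Ideal (Module.End R M)))) ∧
    ¬ IsLocalModule R ((Fin n → R) × M) := by
  classical
  have hM' : ¬ ∃ (g : M →ₗ[R] R) (s : R →ₗ[R] M), g.comp s = LinearMap.id := hM
  set Fst := LinearMap.fst R (Fin n → R) M with hFst
  set Snd := LinearMap.snd R (Fin n → R) M with hSnd
  set Inl := LinearMap.inl R (Fin n → R) M with hInl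
  set Inr := LinearMap.inr R (Fin n → R) M with hInr
  constructor
  · intro φ
    constructor
    · -- forward direction
      intro hφ
      have hJ : ∀ ψ, IsUnit (1 + ψ * φ) := fun ψ => aux_mem_jacobson_bot_iff.1 hφ ψ
      constructor
      · -- the (1,1) block lies in m • End F
        rw [aux_mem_smul_top_end_iff]
        intro v
        rw [aux_mem_smul_top_pi_iff]
        intro i
        by_contra hvi
        rw [IsLocalRing.mem_maximalIdeal, mem_nonunits_iff, not_not] at hvi
        obtain ⟨u, hu⟩ := hvi
        set x : (Fin n → R) →ₗ[R] (Fin n → R) :=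
          (LinearMap.toSpanSingleton R _ v) ∘ₗ
            (((u⁻¹ : Rˣ) : R) • LinearMap.proj (R := R) (φ := fun _ : Fin n => R) i) with hx
        set ψ : Module.End R ((Fin n → R) × M) := - (Inl ∘ₗ x ∘ₗ Fst) with hψ
        have hunit := hJ ψ
        have hinj := ((Module.End.isUnit_iff _).1 hunit).1
        have hxav : x ((Fst ∘ₗ φ ∘ₗ Inl) v) = v := by
          simp only [hx, LinearMap.comp_apply, LinearMap.smul_apply, LinearMap.proj_apply,
            LinearMap.toSpanSingleton_apply]
          have : ((Fst ∘ₗ φ ∘ₗ Inl) v) i = (u : R) := hu.symm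
          rw [LinearMap.comp_apply, LinearMap.comp_apply] at this
          rw [this, smul_eq_mul, u.inv_mul, one_smul]
        have hzero : (1 + ψ * φ) ((v, 0) : (Fin n → R) × M) = 0 := by
          have h1 : (1 + ψ * φ) ((v, 0) : (Fin n → R) × M) = (v, 0) + ψ (φ (v, 0)) := by
            simp [LinearMap.add_apply, Module.End.mul_apply]
          rw [h1, hψ]
          have h2 : (- (Inl ∘ₗ x ∘ₗ Fst)) (φ (v, 0)) = - (v, (0 : M)) := by
            rw [LinearMap.neg_apply, neg_inj]
            have hvv : φ ((v, 0) : (Fin n → R) × M) = φ (Inl v) := by rw [hInl]; rfl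
            rw [LinearMap.comp_apply, LinearMap.comp_apply, hvv]
            have : Fst (φ (Inl v)) = (Fst ∘ₗ φ ∘ₗ Inl) v := rfl
            rw [this, hxav, hInl, LinearMap.inl_apply]
          rw [h2, add_neg_cancel]
        have hveq : ((v, 0) : (Fin n → R) × M) = 0 := by
          apply hinj
          rw [hzero, map_zero]
        have hv0 : v = 0 := congrArg Prod.fst hveq
        apply u.ne_zero
        rw [hu, hv0, map_zero]
        rfl
      · -- the (2,2) block lies in the Jacobson radical of End M
        rw [aux_mem_jacobson_bot_iff]
        intro y
        set ψ : Module.End R ((Fin n → R) × M) := Inr ∘ₗ y ∘ₗ Snd with hψ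
        have hunit := hJ ψ
        set θ := 1 + ψ * φ with hθ
        have hbij := (Module.End.isUnit_iff θ).1 hunit
        have hfst : ∀ z : (Fin n → R) × M, (θ z).1 = z.1 := by
          intro z
          simp [hθ, hψ, LinearMap.add_apply, Module.End.mul_apply, hInr]
        set D := (1 : Module.End R M) + y * (Snd ∘ₗ φ ∘ₗ Inr) with hD
        have hDw : ∀ w : M, (θ ((0, w) : (Fin n → R) × M)).2 = D w := by
          intro w
          have h0 : ((0, w) : (Fin n → R) × M) = Inr w := by rw [hInr]; rfl
          rw [h0]
          simp [hθ, hψ, hD, LinearMap.add_apply, Module.End.mul_apply, LinearMap.comp_apply,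
            hInr, hSnd]
        refine (Module.End.isUnit_iff D).2 ⟨?_, ?_⟩
        · intro w1 w2 hw
          have heq : θ (0, w1) = θ (0, w2) := by
            refine Prod.ext ?_ ?_
            · rw [hfst, hfst]
            · rw [hDw, hDw, hw]
          have := hbij.1 heq
          exact congrArg Prod.snd this
        · intro w
          obtain ⟨⟨z1, z2⟩, hz⟩ := hbij.2 ((0, w) : (Fin n → R) × M)
          have hz1 : z1 = 0 := by
            have := hfst (z1, z2)
            rw [hz] at this
            simpa using this.symm
          refine ⟨z2, ?_⟩
          rw [← hDw z2]
          have : ((0, z2) : (Fin n → R) × M) = (z1, z2) := by rw [hz1]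
          rw [this, hz]
    · -- backward direction
      rintro ⟨ha, hd⟩
      rw [aux_mem_jacobson_bot_iff]
      intro ψ
      set θ := 1 + ψ * φ with hθ
      set A := Fst ∘ₗ θ ∘ₗ Inl with hA
      set B := Fst ∘ₗ θ ∘ₗ Inr with hB
      set C := Snd ∘ₗ θ ∘ₗ Inl with hC
      set D := Snd ∘ₗ θ ∘ₗ Inr with hD
      have ha' : ∀ v, (Fst ∘ₗ φ ∘ₗ Inl) v ∈
          (maximalIdeal R) • (⊤ : Submodule R (Fin n → R)) :=
        (aux_mem_smul_top_end_iff _ _).1 ha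
      -- A = 1 + small
      have hA_small : ∀ v, A v - v ∈ (maximalIdeal R) • (⊤ : Submodule R (Fin n → R)) := by
        intro v
        have h1 : A v - v = Fst (ψ (φ (Inl v))) := by
          simp [hA, hθ, LinearMap.add_apply, Module.End.mul_apply, hInl, hFst]
        have h2 := aux_split (ψ := Fst ∘ₗ ψ) (φ (Inl v))
        simp only [LinearMap.comp_apply] at h2
        rw [h1, h2]
        refine Submodule.add_mem _ ?_ ?_
        · exact aux_apply_mem_smul_top _ (Fst ∘ₗ ψ ∘ₗ Inl) (ha' v)
        · exact aux_hom_small hM' (Fst ∘ₗ ψ ∘ₗ Inr) ((φ (Inl v)).2)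
      have hAunit : IsUnit A := aux_unit_of_one_add_small A hA_small
      obtain ⟨uA, huA⟩ := hAunit
      set A' : Module.End R (Fin n → R) := ((uA⁻¹ : _ˣ) : Module.End R (Fin n → R)) with hA'
      have hAA' : ∀ z, A (A' z) = z := by
        intro z
        have h1 : A * A' = 1 := by rw [← huA]; exact uA.mul_inv
        have := DFunLike.congr_fun h1 z
        simpa [Module.End.mul_apply] using this
      have hB_small : ∀ w, B w ∈ (maximalIdeal R) • (⊤ : Submodule R (Fin n → R)) :=
        aux_hom_small hM' B
      -- D = 1 + (element of J₀)
      have hD_rad : D - 1 ∈ Ideal.jacobson (⊥ : Ideal (Module.End R M)) := by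
        have hDdec : D - 1 = ((Snd ∘ₗ ψ ∘ₗ Inl) ∘ₗ (Fst ∘ₗ φ ∘ₗ Inr))
            + (Snd ∘ₗ ψ ∘ₗ Inr) ∘ₗ (Snd ∘ₗ φ ∘ₗ Inr) := by
          refine LinearMap.ext fun w => ?_
          have h1 : (D - 1) w = Snd (ψ (φ (Inr w))) := by
            simp [hD, hθ, LinearMap.sub_apply, LinearMap.add_apply, Module.End.mul_apply,
              hInr, hSnd]
          have h2 := aux_split (ψ := Snd ∘ₗ ψ) (φ (Inr w))
          simp only [LinearMap.comp_apply] at h2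
          rw [h1, h2]
          rfl
        rw [hDdec]
        refine Ideal.add_mem _ ?_ ?_
        · refine aux_small_mem_jacobson _ fun w => ?_
          exact aux_apply_mem_smul_top _ (Snd ∘ₗ ψ ∘ₗ Inl)
            (aux_hom_small hM' (Fst ∘ₗ φ ∘ₗ Inr) w)
        · rw [← Module.End.mul_eq_comp]
          exact Ideal.mul_mem_left _ _ hd
      -- the Schur complement
      set s : Module.End R M := D - C ∘ₗ (A' ∘ₗ B) with hs
      have hs_rad : s - 1 ∈ Ideal.jacobson (⊥ : Ideal (Module.End R M)) := by
        have : s - 1 = (D - 1) - C ∘ₗ (A' ∘ₗ B) := by rw [hs]; abel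
        rw [this]
        refine Submodule.sub_mem _ hD_rad ?_
        refine aux_small_mem_jacobson _ fun w => ?_
        have h1 : (C ∘ₗ (A' ∘ₗ B)) w = C (A' (B w)) := rfl
        rw [h1]
        exact aux_apply_mem_smul_top _ C (aux_apply_mem_smul_top _ A' (hB_small w))
      have hs_unit : IsUnit s := by
        have h := aux_mem_jacobson_bot_iff.1 hs_rad 1
        have h2 : (1 : Module.End R M) + 1 * (s - 1) = s := by noncomm_ring
        rwa [h2] at h
      obtain ⟨uS, huS⟩ := hs_unit
      set s' : Module.End R M := ((uS⁻¹ : _ˣ) : Module.End R M) with hs'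
      have hss' : ∀ z, s (s' z) = z := by
        intro z
        have h1 : s * s' = 1 := by rw [← huS]; exact uS.mul_inv
        have := DFunLike.congr_fun h1 z
        simpa [Module.End.mul_apply] using this
      -- θ is surjective
      have hsurj : Function.Surjective θ := by
        rintro ⟨x, y⟩
        refine ⟨(A' (x - B (s' (y - C (A' x)))), s' (y - C (A' x))), ?_⟩
        set v := s' (y - C (A' x)) with hv
        set u := A' (x - B v) with huu
        have hblocks := aux_blocks θ u v
        rw [← hFst, ← hSnd, ← hInl, ← hInr, ← hA, ← hB, ← hC, ← hD] at hblocks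
        rw [hblocks]
        have hfst' : A u + B v = x := by
          rw [huu, hAA', sub_add_cancel]
        have hsv : s v = y - C (A' x) := by rw [hv]; exact hss' _
        have hsv' : D v - C (A' (B v)) = y - C (A' x) := by
          rw [← hsv, hs]
          simp [LinearMap.sub_apply, LinearMap.comp_apply]
        have hsnd' : C u + D v = y := by
          rw [huu, map_sub, map_sub]
          have : C (A' x) - C (A' (B v)) + D v = C (A' x) + (D v - C (A' (B v))) := by abel
          rw [this, hsv']
          abel
        rw [hfst', hsnd']
      have hinj : Function.Injective θ :=
        IsNoetherian.injective_of_surjective_endomorphism θ hsurj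
      exact (Module.End.isUnit_iff θ).2 ⟨hinj, hsurj⟩
  · -- not a local module
    rintro ⟨I, hItop, hI⟩
    set e : Module.End R ((Fin n → R) × M) := Inl ∘ₗ Fst with he
    set f : Module.End R ((Fin n → R) × M) := Inr ∘ₗ Snd with hf
    -- first proper two-sided ideal
    set I₁ : TwoSidedIdeal (Module.End R ((Fin n → R) × M)) := TwoSidedIdeal.mk'
      {χ | ∀ v, Fst (χ (Inl v)) ∈ (maximalIdeal R) • (⊤ : Submodule R (Fin n → R))}
      (by intro v; simp)
      (by
        intro x y hx hy v
        rw [LinearMap.add_apply, map_add]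
        exact Submodule.add_mem _ (hx v) (hy v))
      (by
        intro x hx v
        rw [LinearMap.neg_apply, map_neg]
        exact Submodule.neg_mem _ (hx v))
      (by
        intro x y hy v
        rw [Module.End.mul_apply]
        have h2 := aux_split (ψ := Fst ∘ₗ x) (y (Inl v))
        simp only [LinearMap.comp_apply] at h2
        rw [h2]
        refine Submodule.add_mem _ ?_ ?_
        · exact aux_apply_mem_smul_top _ (Fst ∘ₗ x ∘ₗ Inl) (hy v)
        · exact aux_hom_small hM' (Fst ∘ₗ x ∘ₗ Inr) ((y (Inl v)).2))
      (by
        intro x y hx v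
        rw [Module.End.mul_apply]
        have h2 := aux_split (ψ := Fst ∘ₗ x) (y (Inl v))
        simp only [LinearMap.comp_apply] at h2
        rw [h2]
        refine Submodule.add_mem _ ?_ ?_
        · exact hx ((y (Inl v)).1)
        · exact aux_hom_small hM' (Fst ∘ₗ x ∘ₗ Inr) ((y (Inl v)).2)) with hI₁
    -- second proper two-sided ideal
    have hdec : ∀ x y : Module.End R ((Fin n → R) × M),
        Snd ∘ₗ (x * y) ∘ₗ Inr = ((Snd ∘ₗ x ∘ₗ Inl) ∘ₗ (Fst ∘ₗ y ∘ₗ Inr))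
          + (Snd ∘ₗ x ∘ₗ Inr) ∘ₗ (Snd ∘ₗ y ∘ₗ Inr) := by
      intro x y
      refine LinearMap.ext fun w => ?_
      have h2 := aux_split (ψ := Snd ∘ₗ x) (y (Inr w))
      simp only [LinearMap.comp_apply] at h2
      simp only [LinearMap.comp_apply, Module.End.mul_apply, LinearMap.add_apply]
      rw [h2]
      rfl
    set I₂ : TwoSidedIdeal (Module.End R ((Fin n → R) × M)) := TwoSidedIdeal.mk'
      {χ | Snd ∘ₗ χ ∘ₗ Inr ∈ Ideal.jacobson (⊥ : Ideal (Module.End R M))}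
      (by
        simp only [Set.mem_setOf_eq]
        have h0 : Snd ∘ₗ (0 : Module.End R ((Fin n → R) × M)) ∘ₗ Inr = 0 := by
          refine LinearMap.ext fun w => ?_
          simp
        rw [h0]
        exact Submodule.zero_mem _)
      (by
        intro x y hx hy
        have h0 : Snd ∘ₗ (x + y) ∘ₗ Inr = Snd ∘ₗ x ∘ₗ Inr + Snd ∘ₗ y ∘ₗ Inr := by
          refine LinearMap.ext fun w => ?_
          simp
        simp only [Set.mem_setOf_eq]
        rw [h0]
        exact Submodule.add_mem _ hx hy)
      (by
        intro x hx
        have h0 : Snd ∘ₗ (-x) ∘ₗ Inr = -(Snd ∘ₗ x ∘ₗ Inr) := by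
          refine LinearMap.ext fun w => ?_
          simp
        simp only [Set.mem_setOf_eq]
        rw [h0]
        exact Submodule.neg_mem _ hx)
      (by
        intro x y hy
        simp only [Set.mem_setOf_eq]
        rw [hdec x y]
        refine Ideal.add_mem _ ?_ ?_
        · refine aux_small_mem_jacobson _ fun w => ?_
          exact aux_apply_mem_smul_top _ (Snd ∘ₗ x ∘ₗ Inl)
            (aux_hom_small hM' (Fst ∘ₗ y ∘ₗ Inr) w)
        · rw [← Module.End.mul_eq_comp]
          exact Ideal.mul_mem_left _ _ hy)
      (by
        intro x y hx
        simp only [Set.mem_setOf_eq]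
        rw [hdec x y]
        refine Ideal.add_mem _ ?_ ?_
        · refine aux_small_mem_jacobson _ fun w => ?_
          exact aux_apply_mem_smul_top _ (Snd ∘ₗ x ∘ₗ Inl)
            (aux_hom_small hM' (Fst ∘ₗ y ∘ₗ Inr) w)
        · rw [← Module.End.mul_eq_comp]
          exact aux_jac_mul_right hx _) with hI₂
    -- I₁ is proper
    have hI₁top : I₁ ≠ ⊤ := by
      intro h
      have h1 : (1 : Module.End R ((Fin n → R) × M)) ∈ I₁ := (TwoSidedIdeal.one_mem_iff I₁).2 h
      rw [hI₁, TwoSidedIdeal.mem_mk', Set.mem_setOf_eq] at h1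
      have h2 := h1 (fun _ => (1 : R))
      have h3 : Fst ((1 : Module.End R ((Fin n → R) × M)) (Inl (fun _ => (1:R))))
          = fun _ => (1 : R) := rfl
      rw [h3] at h2
      have h4 := (aux_mem_smul_top_pi_iff _ _).1 h2 ⟨0, hn⟩
      exact (Ideal.ne_top_iff_one _).1 (IsLocalRing.maximalIdeal.isMaximal R).ne_top h4
    -- I₂ is proper
    have hI₂top : I₂ ≠ ⊤ := by
      intro h
      have h1 : (1 : Module.End R ((Fin n → R) × M)) ∈ I₂ := (TwoSidedIdeal.one_mem_iff I₂).2 h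
      rw [hI₂, TwoSidedIdeal.mem_mk', Set.mem_setOf_eq] at h1
      have h3 : Snd ∘ₗ (1 : Module.End R ((Fin n → R) × M)) ∘ₗ Inr = (1 : Module.End R M) := by
        refine LinearMap.ext fun w => ?_
        simp [hSnd, hInr]
      rw [h3] at h1
      have h4 := aux_mem_jacobson_bot_iff.1 h1 (-1)
      have h5 : (1 : Module.End R M) + (-1) * 1 = 0 := by noncomm_ring
      rw [h5] at h4
      have h6 : (0 : Module.End R M) = 1 := isUnit_zero_iff.1 h4
      obtain ⟨m1, m2, hne⟩ := exists_pair_ne M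
      apply hne
      have e1 := DFunLike.congr_fun h6 m1
      have e2 := DFunLike.congr_fun h6 m2
      simp only [LinearMap.zero_apply, Module.End.one_apply] at e1 e2
      rw [← e1, ← e2]
    -- e ∈ I₂ and f ∈ I₁
    have hfI₁ : f ∈ I₁ := by
      rw [hI₁, TwoSidedIdeal.mem_mk', Set.mem_setOf_eq]
      intro v
      have : Fst (f (Inl v)) = 0 := by simp [hf, hInl, hInr, hFst, hSnd]
      rw [this]
      exact Submodule.zero_mem _
    have heI₂ : e ∈ I₂ := by
      rw [hI₂, TwoSidedIdeal.mem_mk', Set.mem_setOf_eq]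
      have : Snd ∘ₗ e ∘ₗ Inr = 0 := by
        refine LinearMap.ext fun w => ?_
        simp [he, hInl, hInr, hFst, hSnd]
      rw [this]
      exact Submodule.zero_mem _
    have hef : e + f = 1 := by
      refine LinearMap.ext fun z => ?_
      simp [he, hf, LinearMap.add_apply, hFst, hSnd, hInl, hInr, Prod.ext_iff]
    have h1mem : (1 : Module.End R ((Fin n → R) × M)) ∈ I := by
      rw [← hef]
      exact I.add_mem ((hI I₂ hI₂top) heI₂) ((hI I₁ hI₁top) hfI₁)
    exact hItop (TwoSidedIdeal.eq_top I h1mem)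
end
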